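/- arXiv:2307.12066 — 5 statements merged into one kernel-verified Lean document; each statement's English description precedes it below -/
import Mathlib

section
/- Let g ≥ 2, let Π_g be the genus-g surface group with standard generators a₁, b₁, …, a_g, b_g, and let ε : Π_g → ZMod 2 be a surjective group homomorphism. Then there exists an automorphism θ of Π_g such that ε(θ(a₁)) = 1, while ε(θ(b₁)) = 0 and ε(θ(a_i)) = ε(θ(b_i)) = 0 for all i ∈ {2, …, g}. -/
open scoped commutatorElement

/-- The relator `[a₁,b₁][a₂,b₂]⋯[a_g,b_g]` of the genus-`g` surface group, in the free
group on generators `(i, true) = aᵢ` and `(i, false) = bᵢ` for `i : Fin g`. -/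
def surfaceRelator (g : ℕ) : FreeGroup (Fin g × Bool) :=
  ((List.finRange g).map
    (fun i => ⁅FreeGroup.of (i, true), FreeGroup.of (i, false)⁆)).prod

/-- The genus-`g` surface group, i.e. the fundamental group of the closed orientable
surface of genus `g`, presented with `2g` generators and one relator. -/
def SurfaceGroup (g : ℕ) : Type :=
  PresentedGroup ({surfaceRelator g} : Set (FreeGroup (Fin g × Bool)))

instance (g : ℕ) : Group (SurfaceGroup g) := by
  unfold SurfaceGroup; infer_instance

/-- The standard handle generator `aᵢ` of the surface group. -/
def agen {g : ℕ} (i : Fin g) : SurfaceGroup g := PresentedGroup.of (i, true)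

/-- The standard handle generator `bᵢ` of the surface group. -/
def bgen {g : ℕ} (i : Fin g) : SurfaceGroup g := PresentedGroup.of (i, false)

namespace SGAux

variable {g : ℕ}

lemma hom_relator {G : Type*} [Group G] (φ : FreeGroup (Fin g × Bool) →* G) :
    φ (surfaceRelator g) =
      ((List.finRange g).map
        (fun i => ⁅φ (FreeGroup.of (i, true)), φ (FreeGroup.of (i, false))⁆)).prod := by
  unfold surfaceRelator
  rw [map_list_prod, List.map_map]
  refine congrArg List.prod (List.map_congr_left fun i _ => ?_)
  simp [Function.comp, map_commutatorElement]

lemma relation (g : ℕ) :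
    ((List.finRange g).map (fun i => ⁅(agen i : SurfaceGroup g), bgen i⁆)).prod = 1 := by
  have h1 : (PresentedGroup.mk {surfaceRelator g} (surfaceRelator g) : SurfaceGroup g) = 1 := by
    apply (QuotientGroup.eq_one_iff _).mpr
    exact Subgroup.subset_normalClosure rfl
  rw [hom_relator] at h1
  exact h1

/-- Build a homomorphism of the surface group from generator images satisfying the relation. -/
def toHom (f : Fin g × Bool → SurfaceGroup g)
    (hf : ((List.finRange g).map (fun i => ⁅f (i, true), f (i, false)⁆)).prod = 1) :
    SurfaceGroup g →* SurfaceGroup g :=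
  PresentedGroup.toGroup (f := f) (by
    intro r hr
    rw [Set.mem_singleton_iff] at hr
    subst hr
    rw [hom_relator]
    simp only [FreeGroup.lift_apply_of]
    exact hf)

@[simp] lemma toHom_of (f : Fin g × Bool → SurfaceGroup g) (hf) (x : Fin g × Bool) :
    toHom f hf (PresentedGroup.of x) = f x :=
  PresentedGroup.toGroup.of _

@[simp] lemma toHom_agen (f : Fin g × Bool → SurfaceGroup g) (hf) (k : Fin g) :
    toHom f hf (agen k) = f (k, true) :=
  PresentedGroup.toGroup.of _

@[simp] lemma toHom_bgen (f : Fin g × Bool → SurfaceGroup g) (hf) (k : Fin g) :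
    toHom f hf (bgen k) = f (k, false) :=
  PresentedGroup.toGroup.of _

/-- Build an automorphism from two inverse systems of generator images. -/
lemma hom_ext {G : Type*} [Group G] {φ ψ : SurfaceGroup g →* G}
    (h : ∀ x, φ (PresentedGroup.of x) = ψ (PresentedGroup.of x)) : φ = ψ :=
  PresentedGroup.ext h

def mkAut (f f' : Fin g × Bool → SurfaceGroup g)
    (hf : ((List.finRange g).map (fun i => ⁅f (i, true), f (i, false)⁆)).prod = 1)
    (hf' : ((List.finRange g).map (fun i => ⁅f' (i, true), f' (i, false)⁆)).prod = 1)
    (h1 : ∀ x, toHom f' hf' (f x) = PresentedGroup.of x)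
    (h2 : ∀ x, toHom f hf (f' x) = PresentedGroup.of x) :
    SurfaceGroup g ≃* SurfaceGroup g :=
  MonoidHom.toMulEquiv (toHom f hf) (toHom f' hf')
    (hom_ext fun x => by
      refine (congrArg (toHom f' hf') (toHom_of f hf x)).trans ?_
      exact h1 x)
    (hom_ext fun x => by
      refine (congrArg (toHom f hf) (toHom_of f' hf' x)).trans ?_
      exact h2 x)

@[simp] lemma mkAut_of (f f' hf hf' h1 h2) (x : Fin g × Bool) :
    (mkAut (g := g) f f' hf hf' h1 h2) (PresentedGroup.of x) = f x :=
  toHom_of f hf x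

lemma mkAut_agen (f f' hf hf' h1 h2) (k : Fin g) :
    (mkAut (g := g) f f' hf hf' h1 h2) (agen k) = f (k, true) :=
  toHom_of f hf _

lemma mkAut_bgen (f f' hf hf' h1 h2) (k : Fin g) :
    (mkAut (g := g) f f' hf hf' h1 h2) (bgen k) = f (k, false) :=
  toHom_of f hf _

/-- Replace the two entries at adjacent positions `i`, `j` in the relator product. -/
lemma prod_pair_replace {G : Type*} [Group G] (F H : Fin g → G) (i j : Fin g)
    (hij : (i : ℕ) + 1 = (j : ℕ))
    (hoff : ∀ k, k ≠ i → k ≠ j → F k = H k)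
    (hpair : F i * F j = H i * H j) :
    ((List.finRange g).map F).prod = ((List.finRange g).map H).prod := by
  have hi : (i : ℕ) < (List.finRange g).length := by simp
  have hj : (j : ℕ) < (List.finRange g).length := by simp
  have hdec : List.finRange g =
      (List.finRange g).take i ++ i :: j :: (List.finRange g).drop ((j : ℕ) + 1) := by
    conv_lhs => rw [← List.take_append_drop (i : ℕ) (List.finRange g)]
    rw [List.drop_eq_getElem_cons hi, List.getElem_finRange]
    rw [hij, List.drop_eq_getElem_cons hj, List.getElem_finRange]
    simp [Fin.cast]
  have hnd := List.nodup_finRange g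
  rw [hdec] at hnd
  rw [List.nodup_append] at hnd
  obtain ⟨-, hnd2, hdisj⟩ := hnd
  have hmemi : i ∈ i :: j :: (List.finRange g).drop ((j : ℕ) + 1) := by simp
  have hmemj : j ∈ i :: j :: (List.finRange g).drop ((j : ℕ) + 1) := by simp
  have htake : ∀ k ∈ (List.finRange g).take (i : ℕ), F k = H k := by
    intro k hk
    exact hoff k (fun h => hdisj k hk i hmemi h) (fun h => hdisj k hk j hmemj h)
  have hdrop : ∀ k ∈ (List.finRange g).drop ((j : ℕ) + 1), F k = H k := by
    intro k hk
    simp only [List.nodup_cons] at hnd2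
    refine hoff k (fun h => hnd2.1 ?_) (fun h => hnd2.2.1 ?_)
    · subst h; simp [hk]
    · subst h; exact hk
  conv_lhs => rw [hdec]
  conv_rhs => rw [hdec]
  rw [List.map_append, List.map_append, List.prod_append, List.prod_append,
    List.map_cons, List.map_cons, List.map_cons, List.map_cons,
    List.prod_cons, List.prod_cons, List.prod_cons, List.prod_cons,
    List.map_congr_left htake, List.map_congr_left hdrop]
  congr 1
  rw [← mul_assoc, ← mul_assoc, hpair]
section Moves

variable {g : ℕ}

/-! ### Move 1 : `aᵢ ↦ aᵢ bᵢ` -/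

def m1F (i : Fin g) : Fin g × Bool → SurfaceGroup g := fun x =>
  if x = (i, true) then agen i * bgen i else PresentedGroup.of x

def m1G (i : Fin g) : Fin g × Bool → SurfaceGroup g := fun x =>
  if x = (i, true) then agen i * (bgen i)⁻¹ else PresentedGroup.of x

lemma m1F_rel (i : Fin g) :
    ((List.finRange g).map (fun k => ⁅m1F i (k, true), m1F i (k, false)⁆)).prod = 1 := by
  have h : (fun k : Fin g => ⁅m1F i (k, true), m1F i (k, false)⁆)
      = fun k => ⁅(agen k : SurfaceGroup g), bgen k⁆ := by
    funext k
    by_cases hk : k = i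
    · subst hk
      simp only [m1F, commutatorElement_def, agen, bgen, Prod.mk.injEq, Bool.false_eq_true,
        and_false, and_self, if_false, if_true, reduceIte]
      show ⁅agen k * bgen k, bgen k⁆ = ⁅agen k, bgen k⁆
      simp only [commutatorElement_def]
      group
    · simp [m1F, hk, agen, bgen]
  rw [h, SGAux.relation]

lemma m1G_rel (i : Fin g) :
    ((List.finRange g).map (fun k => ⁅m1G i (k, true), m1G i (k, false)⁆)).prod = 1 := by
  have h : (fun k : Fin g => ⁅m1G i (k, true), m1G i (k, false)⁆)
      = fun k => ⁅(agen k : SurfaceGroup g), bgen k⁆ := by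
    funext k
    by_cases hk : k = i
    · subst hk
      simp only [m1G, commutatorElement_def, agen, bgen, Prod.mk.injEq, Bool.false_eq_true,
        and_false, and_self, if_false, if_true, reduceIte]
      show ⁅agen k * (bgen k)⁻¹, bgen k⁆ = ⁅agen k, bgen k⁆
      simp only [commutatorElement_def]
      group
    · simp [m1G, hk, agen, bgen]
  rw [h, SGAux.relation]

def m1Aut (i : Fin g) : SurfaceGroup g ≃* SurfaceGroup g :=
  SGAux.mkAut (m1F i) (m1G i) (m1F_rel i) (m1G_rel i)
    (by
      rintro ⟨k, b⟩
      by_cases hk : k = i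
      · subst hk
        cases b
        · rw [show m1F k (k, false) = bgen k from if_neg (by simp), toHom_bgen]
          exact if_neg (by simp)
        · rw [show m1F k (k, true) = agen k * bgen k from if_pos rfl, map_mul, toHom_agen, toHom_bgen,
            show m1G k (k, true) = agen k * (bgen k)⁻¹ from if_pos rfl, show m1G k (k, false) = bgen k from if_neg (by simp)]
          show _ = agen k
          group
      · cases b <;> simp [m1F, m1G, hk, agen, bgen] <;> rfl)
    (by
      rintro ⟨k, b⟩
      by_cases hk : k = i
      · subst hk
        cases b
        · rw [show m1G k (k, false) = bgen k from if_neg (by simp), toHom_bgen]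
          exact if_neg (by simp)
        · rw [show m1G k (k, true) = agen k * (bgen k)⁻¹ from if_pos rfl, map_mul, map_inv, toHom_agen, toHom_bgen,
            show m1F k (k, true) = agen k * bgen k from if_pos rfl, show m1F k (k, false) = bgen k from if_neg (by simp)]
          show _ = agen k
          group
      · cases b <;> simp [m1F, m1G, hk, agen, bgen] <;> rfl)

end Moves
section Moves2

variable {g : ℕ}

/-! ### Move 2 : `bᵢ ↦ bᵢ aᵢ` -/

def m2F (i : Fin g) : Fin g × Bool → SurfaceGroup g := fun x =>
  if x = (i, false) then bgen i * agen i else PresentedGroup.of x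

def m2G (i : Fin g) : Fin g × Bool → SurfaceGroup g := fun x =>
  if x = (i, false) then bgen i * (agen i)⁻¹ else PresentedGroup.of x

lemma m2F_rel (i : Fin g) :
    ((List.finRange g).map (fun k => ⁅m2F i (k, true), m2F i (k, false)⁆)).prod = 1 := by
  have h : (fun k : Fin g => ⁅m2F i (k, true), m2F i (k, false)⁆)
      = fun k => ⁅(agen k : SurfaceGroup g), bgen k⁆ := by
    funext k
    by_cases hk : k = i
    · subst hk
      simp only [m2F, commutatorElement_def, agen, bgen, Prod.mk.injEq, Bool.true_eq_false,
        and_false, and_self, if_false, if_true, reduceIte]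
      show ⁅agen k, bgen k * agen k⁆ = ⁅agen k, bgen k⁆
      simp only [commutatorElement_def]
      group
    · simp [m2F, hk, agen, bgen]
  rw [h, SGAux.relation]

lemma m2G_rel (i : Fin g) :
    ((List.finRange g).map (fun k => ⁅m2G i (k, true), m2G i (k, false)⁆)).prod = 1 := by
  have h : (fun k : Fin g => ⁅m2G i (k, true), m2G i (k, false)⁆)
      = fun k => ⁅(agen k : SurfaceGroup g), bgen k⁆ := by
    funext k
    by_cases hk : k = i
    · subst hk
      simp only [m2G, commutatorElement_def, agen, bgen, Prod.mk.injEq, Bool.true_eq_false,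
        and_false, and_self, if_false, if_true, reduceIte]
      show ⁅agen k, bgen k * (agen k)⁻¹⁆ = ⁅agen k, bgen k⁆
      simp only [commutatorElement_def]
      group
    · simp [m2G, hk, agen, bgen]
  rw [h, SGAux.relation]

def m2Aut (i : Fin g) : SurfaceGroup g ≃* SurfaceGroup g :=
  SGAux.mkAut (m2F i) (m2G i) (m2F_rel i) (m2G_rel i)
    (by
      rintro ⟨k, b⟩
      by_cases hk : k = i
      · subst hk
        cases b
        · rw [show m2F k (k, false) = bgen k * agen k from if_pos rfl, map_mul, toHom_agen, toHom_bgen,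
            show m2G k (k, false) = bgen k * (agen k)⁻¹ from if_pos rfl, show m2G k (k, true) = agen k from if_neg (by simp)]
          show _ = bgen k
          group
        · rw [show m2F k (k, true) = agen k from if_neg (by simp), toHom_agen]
          exact if_neg (by simp)
      · cases b <;> simp [m2F, m2G, hk, agen, bgen] <;> rfl)
    (by
      rintro ⟨k, b⟩
      by_cases hk : k = i
      · subst hk
        cases b
        · rw [show m2G k (k, false) = bgen k * (agen k)⁻¹ from if_pos rfl, map_mul, map_inv, toHom_agen, toHom_bgen,
            show m2F k (k, false) = bgen k * agen k from if_pos rfl, show m2F k (k, true) = agen k from if_neg (by simp)]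
          show _ = bgen k
          group
        · rw [show m2G k (k, true) = agen k from if_neg (by simp), toHom_agen]
          exact if_neg (by simp)
      · cases b <;> simp [m2F, m2G, hk, agen, bgen] <;> rfl)

/-! ### Mixing move on adjacent handles `i`, `j` -/

def mixF (i j : Fin g) : Fin g × Bool → SurfaceGroup g := fun x =>
  if x = (i, false) then
    bgen i * (agen i)⁻¹ * (bgen i)⁻¹ * agen j * bgen j * (agen j)⁻¹ * bgen i
  else if x = (j, true) then bgen i * (agen i)⁻¹ * (bgen i)⁻¹ * agen j
  else PresentedGroup.of x

def mixG (i j : Fin g) : Fin g × Bool → SurfaceGroup g := fun x =>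
  if x = (i, false) then agen j * (bgen j)⁻¹ * (agen j)⁻¹ * bgen i * agen i
  else if x = (j, true) then
    agen j * (bgen j)⁻¹ * (agen j)⁻¹ * bgen i * agen i * (bgen i)⁻¹ * agen j * bgen j
  else PresentedGroup.of x

section MixEval
variable {i j : Fin g}

lemma mixF_ai (hne : i ≠ j) : mixF i j (i, true) = agen i := by simp [mixF, hne, agen]; rfl
lemma mixF_bi : mixF i j (i, false)
    = bgen i * (agen i)⁻¹ * (bgen i)⁻¹ * agen j * bgen j * (agen j)⁻¹ * bgen i := by
  simp [mixF]
lemma mixF_aj : mixF i j (j, true) = bgen i * (agen i)⁻¹ * (bgen i)⁻¹ * agen j := by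
  simp [mixF]
lemma mixF_bj (hne : i ≠ j) : mixF i j (j, false) = bgen j := by
  simp [mixF, Ne.symm hne, bgen]; rfl
lemma mixF_other {k : Fin g} {b : Bool} (hki : k ≠ i) (hkj : k ≠ j) :
    mixF i j (k, b) = PresentedGroup.of (k, b) := by simp [mixF, hki, hkj]; rfl

lemma mixG_ai (hne : i ≠ j) : mixG i j (i, true) = agen i := by simp [mixG, hne, agen]; rfl
lemma mixG_bi : mixG i j (i, false)
    = agen j * (bgen j)⁻¹ * (agen j)⁻¹ * bgen i * agen i := by simp [mixG]
lemma mixG_aj : mixG i j (j, true)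
    = agen j * (bgen j)⁻¹ * (agen j)⁻¹ * bgen i * agen i * (bgen i)⁻¹ * agen j * bgen j := by
  simp [mixG]
lemma mixG_bj (hne : i ≠ j) : mixG i j (j, false) = bgen j := by
  simp [mixG, Ne.symm hne, bgen]; rfl
lemma mixG_other {k : Fin g} {b : Bool} (hki : k ≠ i) (hkj : k ≠ j) :
    mixG i j (k, b) = PresentedGroup.of (k, b) := by simp [mixG, hki, hkj]; rfl

end MixEval

lemma mixF_rel (i j : Fin g) (hij : (i : ℕ) + 1 = (j : ℕ)) :
    ((List.finRange g).map (fun k => ⁅mixF i j (k, true), mixF i j (k, false)⁆)).prod = 1 := by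
  have hne : i ≠ j := by intro h; subst h; omega
  rw [SGAux.prod_pair_replace (H := fun k => ⁅(agen k : SurfaceGroup g), bgen k⁆) _ i j hij]
  · exact SGAux.relation g
  · intro k hki hkj
    rw [mixF_other hki hkj, mixF_other hki hkj]
    rfl
  · simp only [mixF_ai hne, mixF_bi, mixF_aj, mixF_bj hne]
    simp only [commutatorElement_def]
    group

lemma mixG_rel (i j : Fin g) (hij : (i : ℕ) + 1 = (j : ℕ)) :
    ((List.finRange g).map (fun k => ⁅mixG i j (k, true), mixG i j (k, false)⁆)).prod = 1 := by
  have hne : i ≠ j := by intro h; subst h; omega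
  rw [SGAux.prod_pair_replace (H := fun k => ⁅(agen k : SurfaceGroup g), bgen k⁆) _ i j hij]
  · exact SGAux.relation g
  · intro k hki hkj
    rw [mixG_other hki hkj, mixG_other hki hkj]
    rfl
  · simp only [mixG_ai hne, mixG_bi, mixG_aj, mixG_bj hne]
    simp only [commutatorElement_def]
    group

def mixAut (i j : Fin g) (hij : (i : ℕ) + 1 = (j : ℕ)) : SurfaceGroup g ≃* SurfaceGroup g :=
  SGAux.mkAut (mixF i j) (mixG i j) (mixF_rel i j hij) (mixG_rel i j hij)
    (by
      have hne : i ≠ j := by intro h; subst h; omega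
      rintro ⟨k, b⟩
      by_cases hki : k = i
      · subst hki
        cases b
        · rw [mixF_bi]
          simp only [map_mul, map_inv, SGAux.toHom_agen, SGAux.toHom_bgen]
          simp only [mixG_ai hne, mixG_bi, mixG_aj, mixG_bj hne]
          show _ = bgen k
          group
        · rw [mixF_ai hne, SGAux.toHom_agen, mixG_ai hne]
          rfl
      · by_cases hkj : k = j
        · subst hkj
          cases b
          · rw [mixF_bj hne, SGAux.toHom_bgen, mixG_bj hne]
            rfl
          · rw [mixF_aj]
            simp only [map_mul, map_inv, SGAux.toHom_agen, SGAux.toHom_bgen]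
            simp only [mixG_ai hne, mixG_bi, mixG_aj, mixG_bj hne]
            show _ = agen k
            group
        · rw [mixF_other hki hkj, SGAux.toHom_of, mixG_other hki hkj])
    (by
      have hne : i ≠ j := by intro h; subst h; omega
      rintro ⟨k, b⟩
      by_cases hki : k = i
      · subst hki
        cases b
        · rw [mixG_bi]
          simp only [map_mul, map_inv, SGAux.toHom_agen, SGAux.toHom_bgen]
          simp only [mixF_ai hne, mixF_bi, mixF_aj, mixF_bj hne]
          show _ = bgen k
          group
        · rw [mixG_ai hne, SGAux.toHom_agen, mixF_ai hne]
          rfl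
      · by_cases hkj : k = j
        · subst hkj
          cases b
          · rw [mixG_bj hne, SGAux.toHom_bgen, mixF_bj hne]
            rfl
          · rw [mixG_aj]
            simp only [map_mul, map_inv, SGAux.toHom_agen, SGAux.toHom_bgen]
            simp only [mixF_ai hne, mixF_bi, mixF_aj, mixF_bj hne]
            show _ = agen k
            group
        · rw [mixG_other hki hkj, SGAux.toHom_of, mixF_other hki hkj])
end Moves2
section States

variable {g : ℕ}

abbrev MM := Multiplicative (ZMod 2)

def st (ε : SurfaceGroup g →* MM) (k : Fin g) : ZMod 2 × ZMod 2 :=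
  (Multiplicative.toAdd (ε (agen k)), Multiplicative.toAdd (ε (bgen k)))

def sm1 (i : Fin g) (v : Fin g → ZMod 2 × ZMod 2) : Fin g → ZMod 2 × ZMod 2 :=
  fun k => if k = i then ((v i).1 + (v i).2, (v i).2) else v k

def sm2 (i : Fin g) (v : Fin g → ZMod 2 × ZMod 2) : Fin g → ZMod 2 × ZMod 2 :=
  fun k => if k = i then ((v i).1, (v i).2 + (v i).1) else v k

def smix (i j : Fin g) (v : Fin g → ZMod 2 × ZMod 2) : Fin g → ZMod 2 × ZMod 2 :=
  fun k => if k = i then ((v i).1, (v i).2 + (v i).1 + (v j).2)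
    else if k = j then ((v j).1 + (v i).1, (v j).2) else v k

lemma sm1_i (i : Fin g) (v) : sm1 i v i = ((v i).1 + (v i).2, (v i).2) := by simp [sm1]
lemma sm1_other (i : Fin g) {k} (v) (hk : k ≠ i) : sm1 i v k = v k := by simp [sm1, hk]
lemma sm2_i (i : Fin g) (v) : sm2 i v i = ((v i).1, (v i).2 + (v i).1) := by simp [sm2]
lemma sm2_other (i : Fin g) {k} (v) (hk : k ≠ i) : sm2 i v k = v k := by simp [sm2, hk]
lemma smix_i (i j : Fin g) (v) : smix i j v i = ((v i).1, (v i).2 + (v i).1 + (v j).2) := by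
  simp [smix]
lemma smix_j (i j : Fin g) (v) (hne : i ≠ j) :
    smix i j v j = ((v j).1 + (v i).1, (v j).2) := by simp [smix, Ne.symm hne]
lemma smix_other (i j : Fin g) {k} (v) (hki : k ≠ i) (hkj : k ≠ j) :
    smix i j v k = v k := by simp [smix, hki, hkj]

lemma st_comp (ε : SurfaceGroup g →* MM) (θ : SurfaceGroup g ≃* SurfaceGroup g) (k : Fin g) :
    st (ε.comp θ.toMonoidHom) k
      = (Multiplicative.toAdd (ε (θ (agen k))), Multiplicative.toAdd (ε (θ (bgen k)))) := rfl

lemma st_m1 (ε : SurfaceGroup g →* MM) (i : Fin g) :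
    st (ε.comp (m1Aut i).toMonoidHom) = sm1 i (st ε) := by
  funext k
  rw [st_comp, sm1]
  by_cases hk : k = i
  · subst hk
    rw [if_pos rfl]
    have ha : (m1Aut k) (agen k) = agen k * bgen k := by
      rw [show (m1Aut k : SurfaceGroup g ≃* SurfaceGroup g) (agen k) = m1F k (k, true) from
        SGAux.mkAut_agen _ _ _ _ _ _ k]
      simp [m1F]
    have hb : (m1Aut k) (bgen k) = bgen k := by
      rw [show (m1Aut k : SurfaceGroup g ≃* SurfaceGroup g) (bgen k) = m1F k (k, false) from
        SGAux.mkAut_bgen _ _ _ _ _ _ k]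
      simp [m1F, bgen]; rfl
    rw [ha, hb, map_mul, toAdd_mul]
    rfl
  · rw [if_neg hk]
    have ha : (m1Aut i) (agen k) = agen k := by
      rw [show (m1Aut i : SurfaceGroup g ≃* SurfaceGroup g) (agen k) = m1F i (k, true) from
        SGAux.mkAut_agen _ _ _ _ _ _ k]
      simp [m1F, hk, agen]; rfl
    have hb : (m1Aut i) (bgen k) = bgen k := by
      rw [show (m1Aut i : SurfaceGroup g ≃* SurfaceGroup g) (bgen k) = m1F i (k, false) from
        SGAux.mkAut_bgen _ _ _ _ _ _ k]
      simp [m1F, bgen]; rfl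
    rw [ha, hb]
    rfl

lemma st_m2 (ε : SurfaceGroup g →* MM) (i : Fin g) :
    st (ε.comp (m2Aut i).toMonoidHom) = sm2 i (st ε) := by
  funext k
  rw [st_comp, sm2]
  by_cases hk : k = i
  · subst hk
    rw [if_pos rfl]
    have ha : (m2Aut k) (agen k) = agen k := by
      rw [show (m2Aut k : SurfaceGroup g ≃* SurfaceGroup g) (agen k) = m2F k (k, true) from
        SGAux.mkAut_agen _ _ _ _ _ _ k]
      simp [m2F, agen]; rfl
    have hb : (m2Aut k) (bgen k) = bgen k * agen k := by
      rw [show (m2Aut k : SurfaceGroup g ≃* SurfaceGroup g) (bgen k) = m2F k (k, false) from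
        SGAux.mkAut_bgen _ _ _ _ _ _ k]
      simp [m2F]
    rw [ha, hb, map_mul, toAdd_mul]
    rfl
  · rw [if_neg hk]
    have ha : (m2Aut i) (agen k) = agen k := by
      rw [show (m2Aut i : SurfaceGroup g ≃* SurfaceGroup g) (agen k) = m2F i (k, true) from
        SGAux.mkAut_agen _ _ _ _ _ _ k]
      simp [m2F, agen]; rfl
    have hb : (m2Aut i) (bgen k) = bgen k := by
      rw [show (m2Aut i : SurfaceGroup g ≃* SurfaceGroup g) (bgen k) = m2F i (k, false) from
        SGAux.mkAut_bgen _ _ _ _ _ _ k]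
      simp [m2F, hk, bgen]; rfl
    rw [ha, hb]
    rfl

lemma st_mix (ε : SurfaceGroup g →* MM) (i j : Fin g) (hij : (i : ℕ) + 1 = (j : ℕ)) :
    st (ε.comp (mixAut i j hij).toMonoidHom) = smix i j (st ε) := by
  have hne : i ≠ j := by intro h; subst h; omega
  funext k
  rw [st_comp, smix]
  have haut : ∀ x, (mixAut i j hij) (PresentedGroup.of x) = mixF i j x := fun x =>
    SGAux.mkAut_of _ _ _ _ _ _ x
  by_cases hki : k = i
  · subst hki
    rw [if_pos rfl]
    rw [show (mixAut k j hij) (agen k) = mixF k j (k, true) from haut _,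
      show (mixAut k j hij) (bgen k) = mixF k j (k, false) from haut _,
      mixF_ai hne, mixF_bi]
    simp only [map_mul, map_inv, toAdd_mul, toAdd_inv]
    rw [Prod.mk.injEq]
    constructor
    · rfl
    · show _ = Multiplicative.toAdd (ε (bgen k)) + Multiplicative.toAdd (ε (agen k))
        + Multiplicative.toAdd (ε (bgen j))
      generalize Multiplicative.toAdd (ε (agen k)) = X
      generalize Multiplicative.toAdd (ε (bgen k)) = Y
      generalize Multiplicative.toAdd (ε (agen j)) = Z
      generalize Multiplicative.toAdd (ε (bgen j)) = W
      revert X Y Z W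
      decide
  · rw [if_neg hki]
    by_cases hkj : k = j
    · subst hkj
      rw [if_pos rfl]
      rw [show (mixAut i k hij) (agen k) = mixF i k (k, true) from haut _,
        show (mixAut i k hij) (bgen k) = mixF i k (k, false) from haut _,
        mixF_aj, mixF_bj hne]
      simp only [map_mul, map_inv, toAdd_mul, toAdd_inv]
      rw [Prod.mk.injEq]
      constructor
      · show _ = Multiplicative.toAdd (ε (agen k)) + Multiplicative.toAdd (ε (agen i))
        generalize Multiplicative.toAdd (ε (agen i)) = X
        generalize Multiplicative.toAdd (ε (bgen i)) = Y
        generalize Multiplicative.toAdd (ε (agen k)) = Z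
        revert X Y Z
        decide
      · rfl
    · rw [if_neg hkj]
      rw [show (mixAut i j hij) (agen k) = mixF i j (k, true) from haut _,
        show (mixAut i j hij) (bgen k) = mixF i j (k, false) from haut _,
        mixF_other hki hkj, mixF_other hki hkj]
      rfl

inductive SStep (g : ℕ) : (Fin g → ZMod 2 × ZMod 2) → (Fin g → ZMod 2 × ZMod 2) → Prop
  | m1 (i : Fin g) (v : Fin g → ZMod 2 × ZMod 2) : SStep g v (sm1 i v)
  | m2 (i : Fin g) (v : Fin g → ZMod 2 × ZMod 2) : SStep g v (sm2 i v)
  | mix (i j : Fin g) (hij : (i : ℕ) + 1 = (j : ℕ)) (v : Fin g → ZMod 2 × ZMod 2) :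
      SStep g v (smix i j v)

lemma realize_step {ε : SurfaceGroup g →* MM} {v w : Fin g → ZMod 2 × ZMod 2}
    (h : SStep g v w) (hv : st ε = v) :
    ∃ θ : SurfaceGroup g ≃* SurfaceGroup g, st (ε.comp θ.toMonoidHom) = w := by
  cases h with
  | m1 i v => exact ⟨m1Aut i, by rw [st_m1, hv]⟩
  | m2 i v => exact ⟨m2Aut i, by rw [st_m2, hv]⟩
  | mix i j hij v => exact ⟨mixAut i j hij, by rw [st_mix, hv]⟩

lemma realize_rtg {ε : SurfaceGroup g →* MM} {v w : Fin g → ZMod 2 × ZMod 2}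
    (h : Relation.ReflTransGen (SStep g) v w) (hv : st ε = v) :
    ∃ θ : SurfaceGroup g ≃* SurfaceGroup g, st (ε.comp θ.toMonoidHom) = w := by
  induction h with
  | refl => exact ⟨MulEquiv.refl _, by
      rw [← hv]
      rfl⟩
  | tail hab hbc ih =>
    obtain ⟨θ, hθ⟩ := ih
    obtain ⟨θ₂, hθ₂⟩ := realize_step hbc hθ
    exact ⟨θ₂.trans θ, hθ₂⟩

end States
section Combinatorics

variable {g : ℕ}

lemma pair_cases : ∀ p : ZMod 2 × ZMod 2, p ≠ (0, 0) →
    p = (0, 1) ∨ p = (1, 0) ∨ p = (1, 1) := by decide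

lemma sl2_to01 (i : Fin g) (v : Fin g → ZMod 2 × ZMod 2) (h : v i ≠ (0, 0)) :
    Relation.ReflTransGen (SStep g) v
      (fun k => if k = i then ((0 : ZMod 2), (1 : ZMod 2)) else v k) := by
  rcases pair_cases _ h with e | e | e
  · have hfun : (fun k => if k = i then ((0 : ZMod 2), (1 : ZMod 2)) else v k) = v := by
      funext k
      by_cases hk : k = i
      · subst hk; simp [e]
      · simp [hk]
    rw [hfun]
  · refine Relation.ReflTransGen.head (SStep.m2 i v) ?_
    refine Relation.ReflTransGen.head (SStep.m1 i (sm2 i v)) ?_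
    have hfun : sm1 i (sm2 i v)
        = (fun k => if k = i then ((0 : ZMod 2), (1 : ZMod 2)) else v k) := by
      funext k
      by_cases hk : k = i
      · subst hk; simp only [sm1, sm2, if_pos rfl, e]; decide
      · simp [sm1, sm2, hk]
    rw [hfun]
  · refine Relation.ReflTransGen.head (SStep.m1 i v) ?_
    have hfun : sm1 i v
        = (fun k => if k = i then ((0 : ZMod 2), (1 : ZMod 2)) else v k) := by
      funext k
      by_cases hk : k = i
      · subst hk; simp only [sm1, if_pos rfl, e]; decide
      · simp [sm1, hk]
    rw [hfun]

lemma sl2_to10 (i : Fin g) (v : Fin g → ZMod 2 × ZMod 2) (h : v i = (0, 1)) :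
    Relation.ReflTransGen (SStep g) v
      (fun k => if k = i then ((1 : ZMod 2), (0 : ZMod 2)) else v k) := by
  refine Relation.ReflTransGen.head (SStep.m1 i v) ?_
  refine Relation.ReflTransGen.head (SStep.m2 i (sm1 i v)) ?_
  have hfun : sm2 i (sm1 i v)
      = (fun k => if k = i then ((1 : ZMod 2), (0 : ZMod 2)) else v k) := by
    funext k
    by_cases hk : k = i
    · subst hk; simp only [sm2, sm1, if_pos rfl, h]; decide
    · simp [sm1, sm2, hk]
  rw [hfun]

/-- Using an adjacent partner handle `i`, the handle `j` can be zeroed out. -/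
lemma zero_top (i j : Fin g) (hij : (i : ℕ) + 1 = (j : ℕ))
    (v : Fin g → ZMod 2 × ZMod 2) (hvj : v j ≠ (0, 0)) :
    ∃ w, Relation.ReflTransGen (SStep g) v w ∧ w j = (0, 0) ∧ (w i).1 = 1 ∧
      ∀ k, k ≠ i → k ≠ j → w k = v k := by
  have hne : i ≠ j := by intro h; subst h; omega
  -- Stage 1 : make handle j equal to (0,1)
  set s₁ : Fin g → ZMod 2 × ZMod 2 :=
    fun k => if k = j then ((0 : ZMod 2), (1 : ZMod 2)) else v k with hs₁
  have c₁ : Relation.ReflTransGen (SStep g) v s₁ := sl2_to01 j v hvj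
  have hs₁j : s₁ j = (0, 1) := by simp [hs₁]
  have hs₁i : s₁ i = v i := by simp [hs₁, hne]
  have hs₁o : ∀ k, k ≠ j → s₁ k = v k := fun k hk => by simp [hs₁, hk]
  -- Stage 2 : make the first coordinate at handle i equal to 1, keeping j at (0,1)
  have stage2 : ∃ t, Relation.ReflTransGen (SStep g) v t ∧ (t i).1 = 1 ∧ t j = (0, 1) ∧
      ∀ k, k ≠ i → k ≠ j → t k = v k := by
    by_cases h1 : (v i).1 = 1
    · exact ⟨s₁, c₁, by rw [hs₁i]; exact h1, hs₁j, fun k hki hkj => hs₁o k hkj⟩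
    · have h0 : (v i).1 = 0 := by
        have : ∀ z : ZMod 2, z ≠ 1 → z = 0 := by decide
        exact this _ h1
      by_cases h2 : (v i).2 = 1
      · -- v i = (0,1) : one m1 step
        refine ⟨sm1 i s₁, c₁.tail (SStep.m1 i s₁), ?_, ?_, ?_⟩
        · rw [sm1_i, hs₁i, show v i = ((0 : ZMod 2), (1 : ZMod 2)) from Prod.ext h0 h2]
          decide
        · rw [sm1_other i s₁ (Ne.symm hne), hs₁j]
        · intro k hki hkj
          rw [sm1_other i s₁ hki, hs₁o k hkj]
      · have h20 : (v i).2 = 0 := by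
          have : ∀ z : ZMod 2, z ≠ 1 → z = 0 := by decide
          exact this _ h2
        have hvi : v i = (0, 0) := Prod.ext h0 h20
        -- v i = (0,0) : mix then m1
        set u := smix i j s₁ with hu
        have hui : u i = (0, 1) := by
          rw [hu, smix_i, hs₁i, hs₁j, hvi]
          decide
        have huj : u j = (0, 1) := by
          rw [hu, smix_j i j s₁ hne, hs₁i, hs₁j, hvi]
          decide
        have huo : ∀ k, k ≠ i → k ≠ j → u k = v k := fun k hki hkj => by
          rw [hu, smix_other i j s₁ hki hkj, hs₁o k hkj]
        refine ⟨sm1 i u, (c₁.tail (SStep.mix i j hij s₁)).tail (SStep.m1 i u), ?_, ?_, ?_⟩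
        · rw [sm1_i, hui]
          decide
        · rw [sm1_other i u (Ne.symm hne), huj]
        · intro k hki hkj
          rw [sm1_other i u hki, huo k hki hkj]
  obtain ⟨t, ct, hti, htj, hto⟩ := stage2
  -- Stage 3 : move handle j to (1,0)
  set s₂ : Fin g → ZMod 2 × ZMod 2 :=
    fun k => if k = j then ((1 : ZMod 2), (0 : ZMod 2)) else t k with hs₂
  have c₂ : Relation.ReflTransGen (SStep g) v s₂ := ct.trans (sl2_to10 j t htj)
  have hs₂j : s₂ j = (1, 0) := by simp [hs₂]
  have hs₂i : s₂ i = t i := by simp [hs₂, hne]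
  -- Stage 4 : final mix kills handle j
  refine ⟨smix i j s₂, c₂.tail (SStep.mix i j hij s₂), ?_, ?_, ?_⟩
  · rw [smix_j i j s₂ hne, hs₂j, hs₂i, Prod.mk.injEq]
    constructor
    · rw [hti]; decide
    · rfl
  · rw [smix_i, hs₂i]
    exact hti
  · intro k hki hkj
    have : s₂ k = t k := by simp [hs₂, hkj]
    rw [smix_other i j s₂ hki hkj, this, hto k hki hkj]

def targetState (g : ℕ) : Fin g → ZMod 2 × ZMod 2 :=
  fun k => if (k : ℕ) = 0 then (1, 0) else (0, 0)

lemma reach : ∀ n, n ≤ g → ∀ v : Fin g → ZMod 2 × ZMod 2,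
    (∀ k : Fin g, n ≤ (k : ℕ) → v k = (0, 0)) → (∃ k, v k ≠ (0, 0)) →
    Relation.ReflTransGen (SStep g) v (targetState g) := by
  intro n
  induction n with
  | zero =>
    intro _ v hz ⟨k, hk⟩
    exact absurd (hz k (Nat.zero_le _)) hk
  | succ n ih =>
    intro hn v hz hex
    have hng : n < g := hn
    set j : Fin g := ⟨n, hng⟩ with hj
    by_cases hvj : v j = (0, 0)
    · refine ih (le_of_lt hng) v ?_ hex
      intro k hk
      rcases Nat.eq_or_lt_of_le hk with h | h
      · have : k = j := Fin.ext h.symm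
        rw [this]; exact hvj
      · exact hz k h
    · rcases Nat.eq_zero_or_pos n with hn0 | hnpos
      · -- n = 0 : only handle j = 0 can be nonzero; normalize it to (1,0)
        subst hn0
        have c₁ := sl2_to01 j v hvj
        have c₂ := sl2_to10 j (fun k => if k = j then ((0 : ZMod 2), (1 : ZMod 2)) else v k)
          (by simp)
        have hfin : (fun k => if k = j
            then ((1 : ZMod 2), (0 : ZMod 2))
            else (fun k => if k = j then ((0 : ZMod 2), (1 : ZMod 2)) else v k) k)
            = targetState g := by
          funext k
          by_cases hk : k = j
          · subst hk; simp [targetState, hj]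
          · have hk0 : (k : ℕ) ≠ 0 := by
              intro h
              exact hk (Fin.ext (by simp [hj, h]))
            simp only [if_neg hk, targetState, if_neg hk0]
            exact hz k (by omega)
        rw [hfin] at c₂
        exact c₁.trans c₂
      · -- n ≥ 1 : use the partner handle i = n-1
        have hi : n - 1 < g := by omega
        set i : Fin g := ⟨n - 1, hi⟩ with hi'
        have hij : (i : ℕ) + 1 = (j : ℕ) := by show n - 1 + 1 = n; omega
        obtain ⟨w, cw, hwj, hwi, hwo⟩ := zero_top i j hij v hvj
        refine cw.trans (ih (le_of_lt hng) w ?_ ⟨i, ?_⟩)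
        · intro k hk
          rcases Nat.eq_or_lt_of_le hk with h | h
          · have : k = j := Fin.ext h.symm
            rw [this]; exact hwj
          · have hki : k ≠ i := by
              intro e
              rw [e] at h
              have hii : (i : ℕ) = n - 1 := rfl
              omega
            have hkj : k ≠ j := by
              intro e
              rw [e] at h
              have hjj : (j : ℕ) = n := rfl
              omega
            rw [hwo k hki hkj]
            exact hz k h
        · intro h
          rw [h] at hwi
          exact absurd hwi (by decide)
    
end Combinatorics
lemma nontrivial_state (ε : SurfaceGroup g →* MM) (hε : Function.Surjective ε) :
    ∃ k, st ε k ≠ (0, 0) := by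
  by_contra hc
  push_neg at hc
  have hone : ε = 1 := by
    refine SGAux.hom_ext fun x => ?_
    rcases x with ⟨k, b⟩
    have h1 := congrArg Prod.fst (hc k)
    have h2 := congrArg Prod.snd (hc k)
    simp only [st] at h1 h2
    cases b
    · show ε (bgen k) = 1
      have := congrArg Multiplicative.ofAdd h2
      simpa using this
    · show ε (agen k) = 1
      have := congrArg Multiplicative.ofAdd h1
      simpa using this
  obtain ⟨y, hy⟩ := hε (Multiplicative.ofAdd 1)
  rw [hone] at hy
  simp only [MonoidHom.one_apply] at hy
  exact absurd hy (by decide)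

end SGAux


/-- Any epimorphism from a surface group onto `ℤ/2ℤ` admits, after an automorphism of
the surface group, a normalized form: it takes the value `1` on the handle generator
`a₁` and the value `0` on all other standard generators. -/
theorem epi_zmod_two_normalized_basis (g : ℕ) (hg : 2 ≤ g)
    (ε : SurfaceGroup g →* Multiplicative (ZMod 2))
    (hε : Function.Surjective ε) :
    ∃ θ : SurfaceGroup g ≃* SurfaceGroup g,
      ε (θ (agen (⟨0, by omega⟩ : Fin g))) = Multiplicative.ofAdd (1 : ZMod 2) ∧
      ε (θ (bgen (⟨0, by omega⟩ : Fin g))) = Multiplicative.ofAdd (0 : ZMod 2) ∧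
      ∀ i : Fin g, i ≠ (⟨0, by omega⟩ : Fin g) →
        ε (θ (agen i)) = Multiplicative.ofAdd (0 : ZMod 2) ∧
        ε (θ (bgen i)) = Multiplicative.ofAdd (0 : ZMod 2) := by
  obtain ⟨k0, hk0⟩ := SGAux.nontrivial_state ε hε
  have hrtg := SGAux.reach (g := g) g le_rfl (SGAux.st ε)
    (fun k hk => absurd k.isLt (by omega)) ⟨k0, hk0⟩
  obtain ⟨θ, hθ⟩ := SGAux.realize_rtg hrtg rfl
  refine ⟨θ, ?_, ?_, ?_⟩
  · have h := congrFun hθ (⟨0, by omega⟩ : Fin g)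
    have h1 := congrArg Prod.fst h
    simp only [SGAux.st_comp, SGAux.targetState] at h1
    have := congrArg Multiplicative.ofAdd h1
    simpa using this
  · have h := congrFun hθ (⟨0, by omega⟩ : Fin g)
    have h2 := congrArg Prod.snd h
    simp only [SGAux.st_comp, SGAux.targetState] at h2
    have := congrArg Multiplicative.ofAdd h2
    simpa using this
  · intro i hi
    have h := congrFun hθ i
    have hne : (i : ℕ) ≠ 0 := by
      intro hzero
      exact hi (Fin.ext hzero)
    have h1 := congrArg Prod.fst h
    have h2 := congrArg Prod.snd h
    simp only [SGAux.st_comp, SGAux.targetState, if_neg hne] at h1 h2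
    constructor
    · have := congrArg Multiplicative.ofAdd h1
      simpa using this
    · have := congrArg Multiplicative.ofAdd h2
      simpa using this
end

section
/- Let Γ be a discrete subgroup of SL(2,ℝ). Then every element A ∈ Γ that fixes some point of the upper half-plane ℍ has finite order. -/
open Matrix UpperHalfPlane
open scoped MatrixGroups

/-- The subspace topology on `SL(2, ℝ)` induced from the space of 2×2 real matrices. -/
noncomputable instance : TopologicalSpace (Matrix.SpecialLinearGroup (Fin 2) ℝ) :=
  TopologicalSpace.induced (fun A => (A : Matrix (Fin 2) (Fin 2) ℝ)) inferInstance

/-- Every element of a discrete subgroup of `SL(2, ℝ)` which fixes a point of the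
upper half-plane has finite order. -/
theorem finite_order_of_fixes_point_of_discrete
    (Γ : Subgroup SL(2, ℝ)) (hΓ : DiscreteTopology Γ)
    (A : SL(2, ℝ)) (hA : A ∈ Γ) (hfix : ∃ z : ℍ, A • z = z) :
    IsOfFinOrder A := by
  obtain ⟨z, hz⟩ := hfix
  have hy : (0:ℝ) < z.im := z.im_pos
  have hs : (0:ℝ) < Real.sqrt z.im := Real.sqrt_pos.mpr hy
  have hg_det : det !![Real.sqrt z.im, z.re / Real.sqrt z.im; 0, (Real.sqrt z.im)⁻¹] = 1 := by
    simp [Matrix.det_fin_two_of, mul_inv_cancel₀ hs.ne']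
  set g : SL(2,ℝ) := ⟨_, hg_det⟩ with hg
  have hgI : g • UpperHalfPlane.I = z := by
    apply UpperHalfPlane.ext
    rw [specialLinearGroup_apply]
    simp only [UpperHalfPlane.coe_mk, UpperHalfPlane.coe_I, hg]
    show ((Real.sqrt z.im : ℂ) * Complex.I + (z.re / Real.sqrt z.im : ℝ)) /
        ((0:ℝ) * Complex.I + ((Real.sqrt z.im)⁻¹ : ℝ)) = (z : ℂ)
    have h0 : ((0:ℝ):ℂ) * Complex.I + (((Real.sqrt z.im)⁻¹ : ℝ) : ℂ) ≠ 0 := by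
      simp [Complex.ext_iff, hs.ne']
    rw [div_eq_iff h0]
    have hss : Real.sqrt z.im * Real.sqrt z.im = z.im := Real.mul_self_sqrt hy.le
    apply Complex.ext
    · simp only [Complex.add_re, Complex.mul_re, Complex.div_re, Complex.ofReal_re,
        Complex.ofReal_im, Complex.I_re, Complex.I_im, Complex.add_im, Complex.mul_im,
        Complex.div_im, Complex.normSq_apply, UpperHalfPlane.coe_re]
      field_simp
      ring
    · simp only [Complex.add_re, Complex.mul_re, Complex.div_re, Complex.ofReal_re,
        Complex.ofReal_im, Complex.I_re, Complex.I_im, Complex.add_im, Complex.mul_im,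
        Complex.div_im, Complex.normSq_apply, UpperHalfPlane.coe_im]
      field_simp
      linear_combination hss
  set B : SL(2,ℝ) := g⁻¹ * A * g with hB
  have hBI : B • UpperHalfPlane.I = UpperHalfPlane.I := by
    rw [hB, mul_smul, mul_smul, hgI, hz, inv_smul_eq_iff, hgI]
  set a : ℝ := B 1 1 with ha
  set c : ℝ := B 1 0 with hc
  have hdenom : (c : ℂ) * Complex.I + (a : ℂ) ≠ 0 := by
    intro h
    rw [Complex.ext_iff] at h
    simp at h
    have hdet := B.2
    rw [det_fin_two] at hdet
    rw [← ha, ← hc] at hdet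
    rw [h.1, h.2] at hdet
    simp at hdet
  have h1 := congrArg (UpperHalfPlane.coe) hBI
  rw [specialLinearGroup_apply] at h1
  simp only [UpperHalfPlane.coe_mk, UpperHalfPlane.coe_I] at h1
  simp only [Algebra.algebraMap_self, RingHom.id_apply] at h1
  rw [div_eq_iff hdenom] at h1
  rw [Complex.ext_iff] at h1
  simp only [Complex.add_re, Complex.mul_re, Complex.ofReal_re, Complex.I_re,
    Complex.ofReal_im, Complex.I_im, Complex.add_im, Complex.mul_im] at h1
  obtain ⟨h1re, h1im⟩ := h1
  have hB01 : B 0 1 = -c := by rw [hc]; nlinarith [h1re]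
  have hB00 : B 0 0 = a := by rw [ha]; nlinarith [h1im]
  have hBmat : (B : Matrix (Fin 2) (Fin 2) ℝ) = !![a, -c; c, a] := by
    ext i j
    fin_cases i <;> fin_cases j <;>
      simp [hB00, hB01, ha, hc]
  set w : ℂ := ⟨a, c⟩ with hw
  have hdet : a * a + c * c = 1 := by
    have h2 := B.2
    rw [det_fin_two] at h2
    rw [← ha, ← hc, hB00, hB01] at h2
    nlinarith [h2]
  have hwnorm : ‖w‖ = 1 := by
    have : Complex.normSq w = 1 := by
      simp only [Complex.normSq_apply, hw]
      exact hdet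
    rw [Complex.norm_def, this, Real.sqrt_one]
  have key : ∀ n : ℕ, ((B ^ n : SL(2,ℝ)) : Matrix (Fin 2) (Fin 2) ℝ) =
      !![(w ^ n).re, -((w ^ n).im); (w ^ n).im, (w ^ n).re] := by
    intro n
    induction n with
    | zero =>
        ext i j
        fin_cases i <;> fin_cases j <;> simp
    | succ n ih =>
        rw [pow_succ, Matrix.SpecialLinearGroup.coe_mul, ih, hBmat, pow_succ]
        ext i j
        fin_cases i <;> fin_cases j <;>
          simp [Matrix.mul_apply, Fin.sum_univ_two, Complex.mul_re, Complex.mul_im, hw] <;> ring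
  by_contra hfin
  have hsphere : ∀ n : ℕ, w ^ n ∈ Metric.sphere (0:ℂ) 1 := by
    intro n
    simp [mem_sphere_iff_norm, norm_pow, hwnorm]
  obtain ⟨x, -, φ, hφ, hconv⟩ := (isCompact_sphere (0:ℂ) 1).tendsto_subseq hsphere
  have hconv' : Filter.Tendsto (fun k => w ^ φ (k+1) - w ^ φ k) Filter.atTop (nhds 0) := by
    have h2 : Filter.Tendsto (fun k => w ^ φ (k+1)) Filter.atTop (nhds x) :=
      hconv.comp (Filter.tendsto_add_atTop_nat 1)
    simpa using h2.sub hconv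
  set m : ℕ → ℕ := fun k => φ (k+1) - φ k with hm
  have hmpos : ∀ k, 0 < m k := fun k => Nat.sub_pos_of_lt (hφ (Nat.lt_succ_self k))
  have hwm : Filter.Tendsto (fun k => w ^ m k) Filter.atTop (nhds 1) := by
    have heq : ∀ k, ‖w ^ m k - 1‖ = ‖w ^ φ (k+1) - w ^ φ k‖ := by
      intro k
      have hsplit : w ^ φ (k+1) = w ^ φ k * w ^ m k := by
        rw [← pow_add]
        congr 1
        have h3 : φ k ≤ φ (k + 1) := (hφ (by omega)).le
        simp only [hm]
        omega
      calc ‖w ^ m k - 1‖ = ‖w ^ φ k‖ * ‖w ^ m k - 1‖ := by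
              rw [norm_pow, hwnorm, one_pow, one_mul]
        _ = ‖w ^ φ k * (w ^ m k - 1)‖ := (norm_mul _ _).symm
        _ = ‖w ^ φ (k+1) - w ^ φ k‖ := by rw [mul_sub, mul_one, ← hsplit]
    have hnorm : Filter.Tendsto (fun k => ‖w ^ m k - 1‖) Filter.atTop (nhds 0) := by
      simp only [heq]
      simpa using hconv'.norm
    have : Filter.Tendsto (fun k => w ^ m k - 1) Filter.atTop (nhds 0) :=
      tendsto_zero_iff_norm_tendsto_zero.mpr hnorm
    simpa using this.add (tendsto_const_nhds (x := (1:ℂ)))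
  -- matrix convergence
  have hAm : ∀ n : ℕ, A ^ n = g * B ^ n * g⁻¹ := by
    intro n
    rw [hB, ← conj_pow]
    group
  set F : ℂ → Matrix (Fin 2) (Fin 2) ℝ :=
    fun u => (g : Matrix (Fin 2) (Fin 2) ℝ) * !![u.re, -u.im; u.im, u.re] *
      ((g⁻¹ : SL(2,ℝ)) : Matrix (Fin 2) (Fin 2) ℝ) with hF
  have hRmat : ∀ u : ℂ, !![u.re, -u.im; u.im, u.re] =
      u.re • (1 : Matrix (Fin 2) (Fin 2) ℝ) + u.im • !![(0:ℝ), -1; 1, 0] := by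
    intro u
    ext i j
    fin_cases i <;> fin_cases j <;> simp [Matrix.one_apply]
  have hFcont : Continuous F := by
    apply Continuous.matrix_mul
    apply Continuous.matrix_mul continuous_const
    simp only [hRmat]
    exact (Complex.continuous_re.smul continuous_const).add
      (Complex.continuous_im.smul continuous_const)
    exact continuous_const
  have hcoeA : ∀ k, ((A ^ m k : SL(2,ℝ)) : Matrix (Fin 2) (Fin 2) ℝ) = F (w ^ m k) := by
    intro k
    rw [hAm, Matrix.SpecialLinearGroup.coe_mul, Matrix.SpecialLinearGroup.coe_mul, key, hF]
  have hF1 : F 1 = (1 : Matrix (Fin 2) (Fin 2) ℝ) := by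
    have : !![(1:ℂ).re, -(1:ℂ).im; (1:ℂ).im, (1:ℂ).re] = (1 : Matrix (Fin 2) (Fin 2) ℝ) := by
      ext i j
      fin_cases i <;> fin_cases j <;> simp [Matrix.one_apply]
    rw [hF]
    simp only [this, mul_one]
    show (g : Matrix (Fin 2) (Fin 2) ℝ) * ((g⁻¹ : SL(2,ℝ)) : Matrix (Fin 2) (Fin 2) ℝ) = 1
    rw [← Matrix.SpecialLinearGroup.coe_mul, mul_inv_cancel]
    rfl
  have htend : Filter.Tendsto (fun k => ((A ^ m k : SL(2,ℝ)) : Matrix (Fin 2) (Fin 2) ℝ))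
      Filter.atTop (nhds (1 : Matrix (Fin 2) (Fin 2) ℝ)) := by
    simp only [hcoeA]
    rw [← hF1]
    exact (hFcont.tendsto 1).comp hwm
  -- use discreteness
  have hopen : IsOpen ({(⟨1, Γ.one_mem⟩ : Γ)} : Set Γ) := isOpen_discrete _
  obtain ⟨U, hU, hUeq⟩ := isOpen_induced_iff.mp hopen
  obtain ⟨V, hV, hVeq⟩ := isOpen_induced_iff.mp hU
  have h1V : (1 : Matrix (Fin 2) (Fin 2) ℝ) ∈ V := by
    have h1U : (1 : SL(2,ℝ)) ∈ U := by
      have : (⟨1, Γ.one_mem⟩ : Γ) ∈ (Subtype.val ⁻¹' U : Set Γ) := by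
        rw [hUeq]; rfl
      exact this
    rw [← hVeq] at h1U
    simpa using h1U
  have hev : ∀ᶠ k in Filter.atTop, ((A ^ m k : SL(2,ℝ)) : Matrix (Fin 2) (Fin 2) ℝ) ∈ V :=
    htend (hV.mem_nhds h1V)
  obtain ⟨k, hk⟩ := hev.exists
  have hAU : A ^ m k ∈ U := by
    rw [← hVeq]
    exact hk
  have hAinΓ : A ^ m k ∈ Γ := pow_mem hA _
  have : (⟨A ^ m k, hAinΓ⟩ : Γ) ∈ ({(⟨1, Γ.one_mem⟩ : Γ)} : Set Γ) := by
    rw [← hUeq]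
    exact hAU
  have hfinal : A ^ m k = 1 := by
    simpa using congrArg Subtype.val (Set.mem_singleton_iff.mp this)
  exact hfin (isOfFinOrder_iff_pow_eq_one.mpr ⟨m k, hmpos k, hfinal⟩)
end

section
/- (Selberg's Lemma) Let n ≥ 1 and let Γ be a finitely generated subgroup of the general linear group GL(n, ℂ). Then there exists a subgroup Δ ≤ Γ of finite index in Γ that is torsion-free, i.e. every element of Δ other than the identity has infinite order. -/
open Ideal Finset

open Ideal

lemma myInt_jacobson : IsJacobsonRing ℤ := by
  rw [isJacobsonRing_iff_prime_eq]
  intro P hP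
  by_cases hb : P = ⊥
  · subst hb
    rw [eq_bot_iff]
    intro x hx
    rw [Ideal.jacobson, Ideal.mem_sInf] at hx
    by_contra hx0
    have hx0' : x ≠ 0 := by simpa using hx0
    obtain ⟨p, hple, hp⟩ := Nat.exists_infinite_primes (x.natAbs + 1)
    have hmax : (Ideal.span {(p : ℤ)}).IsMaximal := by
      apply PrincipalIdealRing.isMaximal_of_irreducible
      exact (Int.prime_iff_natAbs_prime.mpr (by simpa using hp)).irreducible
    have hdvd := hx ⟨bot_le, hmax⟩
    rw [Ideal.mem_span_singleton] at hdvd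
    have hle : p ≤ x.natAbs :=
      Nat.le_of_dvd (by omega) (by simpa using Int.natAbs_dvd_natAbs.mpr hdvd)
    omega
  · haveI := hP.isMaximal hb
    exact Ideal.jacobson_eq_self_of_isMaximal

/-- A field finitely generated as ℤ-module is finite. -/
lemma myfield_finite (K : Type*) [Field K] [Module.Finite ℤ K] : Finite K := by
  set p := ringChar K with hp
  rcases CharP.char_is_prime_or_zero K p with hprime | hzero
  · haveI : CharP K p := ringChar.charP K
    haveI := Fact.mk hprime
    letI := ZMod.algebra K p
    haveI : Module.Finite (ZMod p) K := Module.Finite.of_restrictScalars_finite ℤ (ZMod p) K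
    exact Module.finite_of_finite (ZMod p)
  · haveI : CharP K 0 := hzero ▸ ringChar.charP K
    haveI : CharZero K := CharP.charP_to_charZero K
    exfalso
    have hint : IsIntegral ℤ ((algebraMap ℚ K) (1/2 : ℚ)) := IsIntegral.of_finite ℤ _
    have h2 : IsIntegral ℤ (1/2 : ℚ) :=
      IsIntegral.tower_bot (algebraMap ℚ K).injective hint
    obtain ⟨y, hy⟩ := IsIntegrallyClosed.isIntegral_iff.mp h2
    have hy' : (y : ℚ) = 1/2 := hy
    field_simp at hy'
    exact absurd hy' (by exact_mod_cast (by omega : (y * 2 : ℤ) ≠ 1))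

/-- Residue fields of finite type ℤ-algebras are finite. -/
lemma myresidue_finite (A : Type*) [CommRing A] [Algebra.FiniteType ℤ A]
    (m : Ideal A) (hm : m.IsMaximal) : Finite (A ⧸ m) := by
  haveI := hm
  haveI : IsJacobsonRing ℤ := myInt_jacobson
  haveI : Algebra.FiniteType ℤ (A ⧸ m) :=
    Algebra.FiniteType.of_surjective
      (Ideal.Quotient.mk m).toIntAlgHom
      (fun x => by obtain ⟨y, hy⟩ := Ideal.Quotient.mk_surjective (I := m) x; exact ⟨y, hy⟩)
  letI : Field (A ⧸ m) := Ideal.Quotient.field m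
  haveI : Module.Finite ℤ (A ⧸ m) := finite_of_finite_type_of_isJacobsonRing ℤ (A ⧸ m)
  exact myfield_finite _
open Ideal Finset

lemma entries_mul_mem {A : Type*} [CommRing A] {n : ℕ} {I J : Ideal A}
    {M N : Matrix (Fin n) (Fin n) A} (hM : ∀ i j, M i j ∈ I) (hN : ∀ i j, N i j ∈ J) :
    ∀ i j, (M * N) i j ∈ I * J := by
  intro i j
  rw [Matrix.mul_apply]
  exact Submodule.sum_mem _ fun k _ => Ideal.mul_mem_mul (hM i k) (hN k j)

lemma entries_pow_mem {A : Type*} [CommRing A] {n : ℕ} {I : Ideal A}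
    {M : Matrix (Fin n) (Fin n) A} (hM : ∀ i j, M i j ∈ I) (t : ℕ) :
    ∀ i j, (M ^ t) i j ∈ I ^ t := by
  induction t with
  | zero => simp [pow_zero]
  | succ t ih =>
    intro i j
    rw [pow_succ, pow_succ]
    exact entries_mul_mem ih hM i j

lemma key_unipotent {A : Type*} [CommRing A] [IsDomain A] [IsNoetherianRing A]
    {m : Ideal A} (hm : m.IsMaximal) {n : ℕ} {M : Matrix (Fin n) (Fin n) A}
    (hM : ∀ i j, M i j ∈ m) {q : ℕ} (hq : 2 ≤ q) (hqm : ((q : ℕ) : A) ∉ m)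
    (h : (1 + M) ^ q = 1) : M = 0 := by
  classical
  by_contra hM0
  have hmt : m ≠ ⊤ := hm.ne_top
  have hKrull := Ideal.iInf_pow_eq_bot_of_isDomain m hmt
  obtain ⟨a, b, hab⟩ : ∃ a b, M a b ≠ 0 := by
    by_contra h'
    push_neg at h'
    exact hM0 (by ext a b; simp [h'])
  have hex : ∃ k, ¬ ∀ i j, M i j ∈ m ^ (k + 1) := by
    by_contra h'
    push_neg at h'
    apply hab
    have : M a b ∈ ⨅ i, m ^ i := by
      rw [Ideal.mem_iInf]
      intro i
      cases i with
      | zero => simp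
      | succ i => exact h' i a b
    rwa [hKrull, Ideal.mem_bot] at this
  set k := Nat.find hex with hkdef
  have hnotall : ¬ ∀ i j, M i j ∈ m ^ (k + 1) := Nat.find_spec hex
  have hk1 : 1 ≤ k := by
    rcases Nat.eq_zero_or_pos k with h0 | h1
    · exfalso
      apply hnotall
      rw [h0]
      intro i j
      simpa [pow_one] using hM i j
    · exact h1
  have hall : ∀ i j, M i j ∈ m ^ k := by
    have hlt : k - 1 < k := by omega
    have hmin := Nat.find_min hex hlt
    push_neg at hmin
    intro i j
    have hkk : k - 1 + 1 = k := by omega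
    rw [← hkk]
    exact hmin i j
  -- binomial expansion
  obtain ⟨r, rfl⟩ : ∃ r, q = 2 + r := ⟨q - 2, by omega⟩
  have hexp := (Commute.one_right M).add_pow (2 + r)
  rw [add_comm 1 M] at h
  rw [h] at hexp
  simp only [one_pow, mul_one] at hexp
  rw [show 2 + r + 1 = r + 1 + 1 + 1 by omega, Finset.sum_range_succ',
    Finset.sum_range_succ'] at hexp
  simp only [zero_add, pow_zero, pow_one, Nat.choose_zero_right, Nat.cast_one, mul_one,
    Nat.choose_one_right] at hexp
  set S : Matrix (Fin n) (Fin n) A :=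
    ∑ x ∈ Finset.range (r + 1),
      M ^ (x + 1 + 1) * (((2 + r).choose (x + 1 + 1) : ℕ) : Matrix (Fin n) (Fin n) A) with hS
  have hMc : M * (((2 + r : ℕ) : ℕ) : Matrix (Fin n) (Fin n) A) = -S := by
    have h0 : S + M * (((2 + r : ℕ) : ℕ) : Matrix (Fin n) (Fin n) A) = 0 := by
      have h1 : S + M * (((2 + r : ℕ) : ℕ) : Matrix (Fin n) (Fin n) A) + 1 = 0 + 1 := by
        rw [zero_add, ← hexp]
      exact add_right_cancel h1
    exact eq_neg_of_add_eq_zero_right h0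
  -- entries of S lie in m ^ (k+1)
  have hSmem : ∀ i j, S i j ∈ m ^ (k + 1) := by
    intro i j
    rw [hS, Matrix.sum_apply]
    apply Submodule.sum_mem
    intro x _
    rw [← Matrix.diagonal_natCast, Matrix.mul_diagonal]
    apply Ideal.mul_mem_right
    have hpmem := entries_pow_mem hall (x + 1 + 1) i j
    have hle : m ^ (k * (x + 1 + 1)) ≤ m ^ (k + 1) :=
      Ideal.pow_le_pow_right (by nlinarith)
    exact hle (by rwa [← pow_mul] at hpmem)
  have hqM : ∀ i j, ((2 + r : ℕ) : A) * M i j ∈ m ^ (k + 1) := by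
    intro i j
    have := congrArg (fun N : Matrix (Fin n) (Fin n) A => N i j) hMc
    simp only [Matrix.neg_apply] at this
    rw [← Matrix.diagonal_natCast, Matrix.mul_diagonal] at this
    rw [mul_comm]
    rw [this]
    exact neg_mem (hSmem i j)
  -- coprimality
  have hsup : Ideal.span {((2 + r : ℕ) : A)} ⊔ m = ⊤ := by
    obtain ⟨y, i, him, hyi⟩ := hm.exists_inv hqm
    rw [Ideal.eq_top_iff_one, ← hyi]
    exact add_mem (Ideal.mem_sup_left (Ideal.mul_mem_left _ _ (Ideal.subset_span rfl)))
      (Ideal.mem_sup_right him)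
  have hcop : IsCoprime (Ideal.span {((2 + r : ℕ) : A)}) (m ^ (k + 1)) :=
    ((Ideal.isCoprime_iff_sup_eq).2 hsup).pow_right
  obtain ⟨c, hc, d, hd, hcd⟩ :=
    Submodule.mem_sup.1 ((Ideal.eq_top_iff_one _).1 ((Ideal.isCoprime_iff_sup_eq).1 hcop))
  obtain ⟨e, he⟩ := Ideal.mem_span_singleton'.1 hc
  apply hnotall
  intro i j
  have : M i j = M i j * c + M i j * d := by rw [← mul_add, hcd, mul_one]
  rw [this]
  apply add_mem
  · rw [← he, show M i j * (e * ((2 + r : ℕ) : A)) = e * (((2 + r : ℕ) : A) * M i j) by ring]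
    exact Ideal.mul_mem_left _ _ (hqM i j)
  · exact Ideal.mul_mem_left _ _ hd


/-- The congruence subgroup construction: reduction mod a maximal ideal gives a
finite-index subgroup in which torsion has order divisible only by the residue
characteristic. -/
lemma congruence_subgroup {n : ℕ} {A : Type*} [CommRing A] [IsDomain A]
    [IsNoetherianRing A] [Algebra.FiniteType ℤ A] {Γ : Type*} [Group Γ]
    (Ψ : Γ →* Matrix (Fin n) (Fin n) A) (hΨinj : ∀ γ, Ψ γ = 1 → γ = 1)
    (m : Ideal A) (hm : m.IsMaximal) :
    ∃ K : Subgroup Γ, K.FiniteIndex ∧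
      ∀ z : Γ, z ∈ K → IsOfFinOrder z →
        ∀ q : ℕ, q.Prime → q ∣ orderOf z → ((q : ℕ) : A ⧸ m) = 0 := by
  classical
  haveI := hm
  set Φ : Γ →* Matrix (Fin n) (Fin n) (A ⧸ m) :=
    ((Ideal.Quotient.mk m).mapMatrix.toMonoidHom).comp Ψ with hΦ
  set f : Γ →* (Matrix (Fin n) (Fin n) (A ⧸ m))ˣ := Φ.toHomUnits with hf
  haveI hfinq : Finite (A ⧸ m) := myresidue_finite A m hm
  haveI : Finite ((Matrix (Fin n) (Fin n) (A ⧸ m))ˣ) := inferInstance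
  haveI : Finite f.range := Subgroup.instFiniteSubtypeMem f.range
  refine ⟨f.ker, Subgroup.finiteIndex_ker f, ?_⟩
  intro z hz hzfin q hq hqdvd
  by_contra hq0
  -- q is invertible mod m
  have hqm : ((q : ℕ) : A) ∉ m := by
    intro hmem
    apply hq0
    have : (Ideal.Quotient.mk m) ((q : ℕ) : A) = 0 := Ideal.Quotient.eq_zero_iff_mem.2 hmem
    rwa [map_natCast] at this
  -- pass to an element of order exactly q
  have hN0 : orderOf z ≠ 0 := hzfin.orderOf_pos.ne'
  set w : Γ := z ^ (orderOf z / q) with hw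
  have hdiv : orderOf z / q ≠ 0 := by
    intro h0
    have := Nat.div_eq_zero_iff.1 h0
    have := hq.pos
    have := Nat.le_of_dvd (Nat.pos_of_ne_zero hN0) hqdvd
    omega
  have hworder : orderOf w = q := by
    rw [hw, orderOf_pow' z hdiv, Nat.gcd_eq_right (Nat.div_dvd_of_dvd hqdvd),
      Nat.div_div_self hqdvd hN0]
  have hwq : w ^ q = 1 := by rw [← hworder]; exact pow_orderOf_eq_one w
  have hwker : w ∈ f.ker := Subgroup.pow_mem _ hz _
  -- the congruence matrix
  set M : Matrix (Fin n) (Fin n) A := Ψ w - 1 with hM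
  have hΦw : (Ψ w).map (Ideal.Quotient.mk m) = 1 := by
    have h1 : f w = 1 := hwker
    have h2 : Φ w = 1 := by
      have := congrArg Units.val h1
      rwa [MonoidHom.coe_toHomUnits] at this
    exact h2
  have hMm : ∀ i j, M i j ∈ m := by
    intro i j
    rw [← Ideal.Quotient.eq_zero_iff_mem]
    have h2 := congrArg (fun N => N i j) hΦw
    simp only [Matrix.map_apply] at h2
    rw [hM, Matrix.sub_apply, RingHom.map_sub, h2]
    rcases eq_or_ne i j with rfl | hij
    · simp [Matrix.one_apply]
    · simp [Matrix.one_apply, hij]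
  have h1M : (1 + M) ^ q = 1 := by
    have : (1 : Matrix (Fin n) (Fin n) A) + M = Ψ w := by rw [hM]; abel
    rw [this, ← map_pow, hwq, map_one]
  have hM0 : M = 0 := key_unipotent hm hMm hq.two_le hqm h1M
  have : Ψ w = 1 := by
    have := hM0
    rw [hM, sub_eq_zero] at this
    exact this
  have hw1 : w = 1 := hΨinj w this
  rw [hw1, orderOf_one] at hworder
  exact hq.one_lt.ne' hworder.symm


/-- A finite-type ℤ-domain of characteristic zero has two maximal ideals of
distinct residue characteristics. -/
lemma exists_two_maximal_ideals (A : Type*) [CommRing A] [IsDomain A] [CharZero A]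
    [Algebra.FiniteType ℤ A] :
    ∃ (m₁ m₂ : Ideal A), m₁.IsMaximal ∧ m₂.IsMaximal ∧
      ∀ q : ℕ, q.Prime → ¬(((q : ℕ) : A ⧸ m₁) = 0 ∧ ((q : ℕ) : A ⧸ m₂) = 0) := by
  haveI : IsJacobsonRing ℤ := myInt_jacobson
  haveI : IsJacobsonRing A := isJacobsonRing_of_finiteType (A := ℤ)
  obtain ⟨m₁, hm₁⟩ := Ideal.exists_maximal A
  haveI := hm₁
  letI : Field (A ⧸ m₁) := Ideal.Quotient.field m₁
  haveI hfin₁ : Finite (A ⧸ m₁) := myresidue_finite A m₁ hm₁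
  set p₁ := ringChar (A ⧸ m₁) with hp₁def
  haveI : CharP (A ⧸ m₁) p₁ := ringChar.charP _
  have hp₁ : p₁.Prime := by
    rcases CharP.char_is_prime_or_zero (A ⧸ m₁) p₁ with h | h
    · exact h
    · exact absurd h (CharP.char_ne_zero_of_finite (A ⧸ m₁) p₁)
  have hp₁A : ((p₁ : ℕ) : A) ≠ 0 := Nat.cast_ne_zero.2 hp₁.ne_zero
  have hjac : ((⊥ : Ideal A)).jacobson = ⊥ :=
    (inferInstance : IsJacobsonRing A).out Ideal.isRadical_bot_of_noZeroDivisors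
  have hnotmem : ((p₁ : ℕ) : A) ∉ ((⊥ : Ideal A)).jacobson := by
    rw [hjac]
    simpa [Ideal.mem_bot] using hp₁A
  rw [Ideal.jacobson, Ideal.mem_sInf] at hnotmem
  push_neg at hnotmem
  obtain ⟨m₂, ⟨-, hm₂⟩, hp₁m₂⟩ := hnotmem
  haveI := hm₂
  letI : Field (A ⧸ m₂) := Ideal.Quotient.field m₂
  haveI hfin₂ : Finite (A ⧸ m₂) := myresidue_finite A m₂ hm₂
  set p₂ := ringChar (A ⧸ m₂) with hp₂def
  haveI : CharP (A ⧸ m₂) p₂ := ringChar.charP _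
  have hp₂ : p₂.Prime := by
    rcases CharP.char_is_prime_or_zero (A ⧸ m₂) p₂ with h | h
    · exact h
    · exact absurd h (CharP.char_ne_zero_of_finite (A ⧸ m₂) p₂)
  have hp₁₂ : p₁ ≠ p₂ := by
    intro hcontr
    apply hp₁m₂
    have : ((p₁ : ℕ) : A ⧸ m₂) = 0 := by
      rw [hcontr]
      exact CharP.cast_eq_zero _ _
    rw [← map_natCast (Ideal.Quotient.mk m₂), Ideal.Quotient.eq_zero_iff_mem] at this
    exact this
  refine ⟨m₁, m₂, hm₁, hm₂, ?_⟩
  rintro q hq ⟨h1, h2⟩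
  have e1 : p₁ = q := by
    have := (CharP.cast_eq_zero_iff (A ⧸ m₁) p₁ q).1 h1
    exact (Nat.prime_dvd_prime_iff_eq hp₁ hq).1 this
  have e2 : p₂ = q := by
    have := (CharP.cast_eq_zero_iff (A ⧸ m₂) p₂ q).1 h2
    exact (Nat.prime_dvd_prime_iff_eq hp₂ hq).1 this
  exact hp₁₂ (e1.trans e2.symm)

/-- The entries of a finitely generated subgroup of `GL(n, ℂ)` generate a
finitely generated subring. -/
lemma exists_entry_subalgebra {n : ℕ} (Γ : Subgroup (Matrix.GeneralLinearGroup (Fin n) ℂ))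
    (hΓ : Γ.FG) :
    ∃ A : Subalgebra ℤ ℂ, A.FG ∧
      ∀ g ∈ Γ, ∀ i j, ((g : Matrix (Fin n) (Fin n) ℂ)) i j ∈ A := by
  classical
  obtain ⟨S, hSgen, hSfin⟩ := (Subgroup.fg_iff Γ).1 hΓ
  set E : Set ℂ := ⋃ g ∈ S,
      (Set.range (fun p : Fin n × Fin n => ((g : Matrix (Fin n) (Fin n) ℂ)) p.1 p.2) ∪
       Set.range (fun p : Fin n × Fin n => ((↑(g⁻¹) : Matrix (Fin n) (Fin n) ℂ)) p.1 p.2))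
      with hE
  have hEfin : E.Finite :=
    Set.Finite.biUnion hSfin (fun g _ => (Set.finite_range _).union (Set.finite_range _))
  refine ⟨Algebra.adjoin ℤ E, Subalgebra.fg_def.2 ⟨E, hEfin, rfl⟩, ?_⟩
  have hP : ∀ g ∈ Γ, (∀ i j, ((g : Matrix (Fin n) (Fin n) ℂ)) i j ∈ Algebra.adjoin ℤ E) ∧
      (∀ i j, ((↑(g⁻¹) : Matrix (Fin n) (Fin n) ℂ)) i j ∈ Algebra.adjoin ℤ E) := by
    intro g hg
    rw [← hSgen] at hg
    induction hg using Subgroup.closure_induction with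
    | mem x hx =>
      constructor
      · intro i j
        apply Algebra.subset_adjoin
        exact Set.mem_biUnion hx (Or.inl ⟨(i, j), rfl⟩)
      · intro i j
        apply Algebra.subset_adjoin
        exact Set.mem_biUnion hx (Or.inr ⟨(i, j), rfl⟩)
    | one =>
      constructor <;>
      · intro i j
        simp only [inv_one, Units.val_one, Matrix.one_apply]
        split
        · exact one_mem _
        · exact zero_mem _
    | mul x y hx hy ihx ihy =>
      constructor
      · intro i j
        rw [Units.val_mul, Matrix.mul_apply]
        exact Subalgebra.sum_mem _ fun k _ => mul_mem (ihx.1 i k) (ihy.1 k j)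
      · intro i j
        rw [mul_inv_rev, Units.val_mul, Matrix.mul_apply]
        exact Subalgebra.sum_mem _ fun k _ => mul_mem (ihy.2 i k) (ihx.2 k j)
    | inv x hx ihx =>
      refine ⟨ihx.2, ?_⟩
      rw [inv_inv]
      exact ihx.1
  exact fun g hg => (hP g hg).1

/-- Selberg's Lemma: a finitely generated subgroup of `GL(n, ℂ)` contains a
torsion-free subgroup of finite index. -/
theorem selberg_lemma (n : ℕ) (hn : 1 ≤ n)
    (Γ : Subgroup (Matrix.GeneralLinearGroup (Fin n) ℂ)) (hΓ : Γ.FG) :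
    ∃ Δ : Subgroup (Matrix.GeneralLinearGroup (Fin n) ℂ), Δ ≤ Γ ∧
      (Δ.subgroupOf Γ).FiniteIndex ∧
      ∀ x ∈ Δ, x ≠ 1 → ¬ IsOfFinOrder x := by
  classical
  obtain ⟨A, hAfg, hmemA⟩ := exists_entry_subalgebra Γ hΓ
  haveI : Algebra.FiniteType ℤ A := (Subalgebra.fg_iff_finiteType A).1 hAfg
  haveI : IsNoetherianRing A := Algebra.FiniteType.isNoetherianRing ℤ A
  -- the matrix representation over A
  set eA : Γ → Matrix (Fin n) (Fin n) A := fun γ =>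
    Matrix.of fun i j => (⟨((γ : Matrix.GeneralLinearGroup (Fin n) ℂ) :
      Matrix (Fin n) (Fin n) ℂ) i j, hmemA ↑γ γ.2 i j⟩ : A) with heA
  have hmap : ∀ γ : Γ, (eA γ).map (algebraMap A ℂ)
      = ((γ : Matrix.GeneralLinearGroup (Fin n) ℂ) : Matrix (Fin n) (Fin n) ℂ) := by
    intro γ; ext i j; rfl
  have hinj : ∀ X Y : Matrix (Fin n) (Fin n) A,
      X.map (algebraMap A ℂ) = Y.map (algebraMap A ℂ) → X = Y := by
    intro X Y hXY
    ext i j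
    have := congrArg (fun Z => Z i j) hXY
    exact this
  have hΨone : eA 1 = 1 := by
    apply hinj
    rw [hmap]
    have : (((1 : Γ) : Matrix.GeneralLinearGroup (Fin n) ℂ) :
        Matrix (Fin n) (Fin n) ℂ) = 1 := by simp
    rw [this]
    exact (Matrix.map_one _ (map_zero _) (map_one _)).symm
  have hΨmul : ∀ γ δ : Γ, eA (γ * δ) = eA γ * eA δ := by
    intro γ δ
    apply hinj
    rw [Matrix.map_mul, hmap, hmap, hmap, Subgroup.coe_mul, Units.val_mul]
  set Ψ : Γ →* Matrix (Fin n) (Fin n) A :=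
    { toFun := eA, map_one' := hΨone, map_mul' := hΨmul } with hΨ
  have hΨinj : ∀ γ : Γ, Ψ γ = 1 → γ = 1 := by
    intro γ hγ
    have h1 : ((γ : Matrix.GeneralLinearGroup (Fin n) ℂ) : Matrix (Fin n) (Fin n) ℂ) = 1 := by
      rw [← hmap γ]
      show (Ψ γ).map (algebraMap A ℂ) = 1
      rw [hγ]
      exact Matrix.map_one _ (map_zero _) (map_one _)
    exact Subtype.ext (Units.ext h1)
  obtain ⟨m₁, m₂, hm₁, hm₂, hdistinct⟩ := exists_two_maximal_ideals A
  obtain ⟨K₁, hK₁fi, hK₁⟩ := congruence_subgroup Ψ hΨinj m₁ hm₁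
  obtain ⟨K₂, hK₂fi, hK₂⟩ := congruence_subgroup Ψ hΨinj m₂ hm₂
  haveI := hK₁fi
  haveI := hK₂fi
  refine ⟨(K₁ ⊓ K₂).map Γ.subtype, Subgroup.map_subtype_le _, ?_, ?_⟩
  · have : ((K₁ ⊓ K₂).map Γ.subtype).subgroupOf Γ = K₁ ⊓ K₂ :=
      Subgroup.comap_map_eq_self_of_injective (Subgroup.subtype_injective Γ) _
    rw [Subgroup.subgroupOf] at this ⊢
    rw [this]
    infer_instance
  · rintro x hx hx1 hxfin
    obtain ⟨y, hy, rfl⟩ := hx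
    have hyfin : IsOfFinOrder y := by
      have h := orderOf_injective Γ.subtype (Subgroup.subtype_injective Γ) y
      rw [← orderOf_pos_iff] at hxfin ⊢
      rwa [h] at hxfin
    have hYord : orderOf y = 1 := by
      rw [Nat.eq_one_iff_not_exists_prime_dvd]
      intro q hq hqdvd
      have h1 := hK₁ y hy.1 hyfin q hq hqdvd
      have h2 := hK₂ y hy.2 hyfin q hq hqdvd
      exact hdistinct q hq ⟨h1, h2⟩
    have hy1 : y = 1 := orderOf_eq_one_iff.1 hYord
    rw [hy1] at hx1
    simp at hx1
end

section
/- Let Γ be an elementary discrete subgroup of SL(2,ℝ). Then Γ cannot contain both a parabolic element (an element B ≠ ±1 with |tr B| = 2) and a hyperbolic element (an element A with |tr A| > 2). -/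
open Matrix UpperHalfPlane
open scoped MatrixGroups

/-- The real projective line `ℝP¹`. -/
abbrev RP1 := Projectivization ℝ (Fin 2 → ℝ)

/-- The action of `SL(2, ℝ)` on `ℝP¹` induced by its linear action on `ℝ²`. -/
noncomputable def projAct (A : SL(2, ℝ)) (x : RP1) : RP1 :=
  Projectivization.map (Matrix.SpecialLinearGroup.toLin' A).toLinearMap
    (Matrix.SpecialLinearGroup.toLin' A).injective x

/-- A subgroup of `SL(2, ℝ)` is elementary if it has a finite orbit in `ℍ`
or a finite orbit in `ℝP¹`. -/
def IsElementary (Γ : Subgroup SL(2, ℝ)) : Prop :=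
  (∃ z : ℍ, {w : ℍ | ∃ γ ∈ Γ, γ • z = w}.Finite) ∨
  (∃ x : RP1, {y : RP1 | ∃ γ ∈ Γ, projAct γ x = y}.Finite)

/-! ### Auxiliary lemmas -/

lemma perp_lemma (u v : Fin 2 → ℝ) (hv : v ≠ 0)
    (h : u 0 * v 0 + u 1 * v 1 = 0) :
    ∃ c : ℝ, u = c • ![-(v 1), v 0] := by
  have hv' : v 0 ≠ 0 ∨ v 1 ≠ 0 := by
    by_contra hc
    push_neg at hc
    exact hv (funext fun i => by fin_cases i <;> simp [hc.1, hc.2])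
  rcases hv' with h0 | h1
  · exact ⟨u 1 / v 0, funext fun i => by fin_cases i <;> (simp; try field_simp; try linarith)⟩
  · exact ⟨-(u 0) / v 1, funext fun i => by fin_cases i <;> (simp; try field_simp; try linarith)⟩

lemma mulVec_two (M : Matrix (Fin 2) (Fin 2) ℝ) (v : Fin 2 → ℝ) (j : Fin 2) :
    (M *ᵥ v) j = M j 0 * v 0 + M j 1 * v 1 := by
  simp [Matrix.mulVec, dotProduct, Fin.sum_univ_two]

/-- rank-one form of a nilpotent matrix killing `v`. -/
lemma rank_one_form (N : Matrix (Fin 2) (Fin 2) ℝ) (v : Fin 2 → ℝ)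
    (hv : v ≠ 0) (hNv : N *ᵥ v = 0) (hN2 : N * N = 0) (hN : N ≠ 0) :
    ∃ κ : ℝ, κ ≠ 0 ∧ ∀ j i, N j i = κ * v j * (![-(v 1), v 0]) i := by
  have hrow : ∀ j : Fin 2, ∃ c : ℝ, (fun i => N j i) = c • ![-(v 1), v 0] := by
    intro j
    apply perp_lemma _ v hv
    have := congrFun hNv j
    rw [mulVec_two] at this
    simpa using this
  obtain ⟨s0, hs0⟩ := hrow 0
  obtain ⟨s1, hs1⟩ := hrow 1
  have hN00 : N 0 0 = s0 * (-(v 1)) := by simpa using congrFun hs0 0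
  have hN01 : N 0 1 = s0 * v 0 := by simpa using congrFun hs0 1
  have hN10 : N 1 0 = s1 * (-(v 1)) := by simpa using congrFun hs1 0
  have hN11 : N 1 1 = s1 * v 0 := by simpa using congrFun hs1 1
  have hd : s0 * (-(v 1)) + s1 * (v 0) = 0 := by
    have hsne : s0 ≠ 0 ∨ s1 ≠ 0 := by
      by_contra hc; push_neg at hc
      exact hN (by ext j i; fin_cases j <;> fin_cases i <;>
        simp [hN00, hN01, hN10, hN11, hc.1, hc.2])
    have hwne : (-(v 1)) ≠ 0 ∨ v 0 ≠ 0 := by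
      by_contra hc; push_neg at hc
      have h1 : v 1 = 0 := by simpa using hc.1
      exact hv (funext fun i => by fin_cases i <;> simp [hc.2, h1])
    have e00 := congrFun (congrFun hN2 0) 0
    have e01 := congrFun (congrFun hN2 0) 1
    have e10 := congrFun (congrFun hN2 1) 0
    have e11 := congrFun (congrFun hN2 1) 1
    simp [Matrix.mul_apply, Fin.sum_univ_two] at e00 e01 e10 e11
    simp only [hN00, hN01, hN10, hN11] at e00 e01 e10 e11
    rcases hsne with hs | hs <;> rcases hwne with hw | hw
    · rcases mul_eq_zero.mp (show s0 * (-(v 1)) * (s0 * (-(v 1)) + s1 * (v 0)) = 0 by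
        linear_combination e00) with h | h
      · exact absurd h (mul_ne_zero hs hw)
      · exact h
    · rcases mul_eq_zero.mp (show s0 * (v 0) * (s0 * (-(v 1)) + s1 * (v 0)) = 0 by
        linear_combination e01) with h | h
      · exact absurd h (mul_ne_zero hs hw)
      · exact h
    · rcases mul_eq_zero.mp (show s1 * (-(v 1)) * (s0 * (-(v 1)) + s1 * (v 0)) = 0 by
        linear_combination e10) with h | h
      · exact absurd h (mul_ne_zero hs hw)
      · exact h
    · rcases mul_eq_zero.mp (show s1 * (v 0) * (s0 * (-(v 1)) + s1 * (v 0)) = 0 by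
        linear_combination e11) with h | h
      · exact absurd h (mul_ne_zero hs hw)
      · exact h
  obtain ⟨t, ht⟩ := perp_lemma ![s0, s1] ![-(v 1), v 0]
    (by
      intro hc
      apply hv
      have h0 := congrFun hc 0
      have h1 := congrFun hc 1
      simp at h0 h1
      exact funext fun i => by fin_cases i <;> simp [h0, h1])
    (by simpa using hd)
  have hts0 : s0 = t * (-(v 0)) := by simpa using congrFun ht 0
  have hts1 : s1 = t * (-(v 1)) := by simpa using congrFun ht 1
  refine ⟨-t, ?_, ?_⟩
  · intro h
    apply hN
    have : t = 0 := by simpa using h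
    ext j i
    fin_cases j <;> fin_cases i <;>
      simp [hN00, hN01, hN10, hN11, hts0, hts1, this]
  · intro j i
    fin_cases j <;> fin_cases i <;>
      (simp [hN00, hN01, hN10, hN11, hts0, hts1]; try ring)

/-- key commutation relations for a nilpotent `N` and `C` sharing the eigenvector `v`. -/
lemma key_comm (N C : Matrix (Fin 2) (Fin 2) ℝ) (v : Fin 2 → ℝ) (μ : ℝ)
    (hv : v ≠ 0) (hNv : N *ᵥ v = 0) (hN2 : N * N = 0)
    (hCv : C *ᵥ v = μ • v) (hdet : C.det = 1) (hμ : μ ≠ 0) :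
    C * N = μ • N ∧ N * C = μ⁻¹ • N := by
  by_cases hN : N = 0
  · simp [hN]
  obtain ⟨κ, hκ, hform⟩ := rank_one_form N v hv hNv hN2 hN
  have hC0 : C 0 0 * v 0 + C 0 1 * v 1 = μ * v 0 := by
    have := congrFun hCv 0; rw [mulVec_two] at this; simpa using this
  have hC1 : C 1 0 * v 0 + C 1 1 * v 1 = μ * v 1 := by
    have := congrFun hCv 1; rw [mulVec_two] at this; simpa using this
  have hdet' : C 0 0 * C 1 1 - C 0 1 * C 1 0 = 1 := by
    rw [det_fin_two] at hdet; exact hdet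
  constructor
  · ext j i
    fin_cases j <;> fin_cases i <;>
      simp only [Matrix.mul_apply, Fin.sum_univ_two, Matrix.smul_apply, smul_eq_mul, hform,
        Fin.zero_eta, Fin.mk_one, Fin.isValue, Matrix.cons_val_zero, Matrix.cons_val_one,
        Matrix.head_cons]
    · linear_combination (κ * (-(v 1))) * hC0
    · linear_combination (κ * v 0) * hC0
    · linear_combination (κ * (-(v 1))) * hC1
    · linear_combination (κ * v 0) * hC1
  · have hwC : ∃ c : ℝ, (fun i => (-(v 1)) * C 0 i + (v 0) * C 1 i) = c • ![-(v 1), v 0] := by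
      apply perp_lemma _ v hv
      show ((-(v 1)) * C 0 0 + (v 0) * C 1 0) * v 0 + ((-(v 1)) * C 0 1 + (v 0) * C 1 1) * v 1 = 0
      linear_combination (-(v 1)) * hC0 + (v 0) * hC1
    obtain ⟨c, hc⟩ := hwC
    have hc0 : (-(v 1)) * C 0 0 + (v 0) * C 1 0 = c * (-(v 1)) := by simpa using congrFun hc 0
    have hc1 : (-(v 1)) * C 0 1 + (v 0) * C 1 1 = c * (v 0) := by simpa using congrFun hc 1
    have hS : v 0 ^ 2 + v 1 ^ 2 ≠ 0 := by
      intro h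
      apply hv
      have h0 : v 0 = 0 := by nlinarith [sq_nonneg (v 0), sq_nonneg (v 1)]
      have h1 : v 1 = 0 := by nlinarith [sq_nonneg (v 0), sq_nonneg (v 1)]
      exact funext fun i => by fin_cases i <;> simp [h0, h1]
    have hcμ : c * μ = 1 := by
      have key : (c * μ - 1) * (v 0 ^ 2 + v 1 ^ 2) = 0 := by
        linear_combination (μ * v 1) * hc0 - (μ * v 0) * hc1 +
          (C 1 0 * v 1 - C 1 1 * v 0) * hC0 + (C 0 1 * v 0 - C 0 0 * v 1) * hC1 +
          (v 0 ^ 2 + v 1 ^ 2) * hdet'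
      rcases mul_eq_zero.mp key with h | h
      · linarith
      · exact absurd h hS
    have hcinv : μ⁻¹ = c := by
      field_simp
      linarith [hcμ]
    ext j i
    rw [hcinv]
    fin_cases j <;> fin_cases i <;>
      simp only [Matrix.mul_apply, Fin.sum_univ_two, Matrix.smul_apply, smul_eq_mul, hform,
        Fin.zero_eta, Fin.mk_one, Fin.isValue, Matrix.cons_val_zero, Matrix.cons_val_one,
        Matrix.head_cons]
    · linear_combination (κ * v 0) * hc0
    · linear_combination (κ * v 0) * hc1
    · linear_combination (κ * v 1) * hc0
    · linear_combination (κ * v 1) * hc1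

/-- Cayley–Hamilton for `SL₂`. -/
lemma sl2_sq (M : Matrix (Fin 2) (Fin 2) ℝ) (h : M.det = 1) :
    M * M = M.trace • M - 1 := by
  rw [det_fin_two] at h
  ext i j
  fin_cases i <;> fin_cases j <;>
    simp [Matrix.mul_apply, Fin.sum_univ_two, Matrix.trace_fin_two, Matrix.one_apply] <;>
    linarith [h]

lemma unipotent_pow (σ : ℝ) (hσ : σ ^ 2 = 1) (N : Matrix (Fin 2) (Fin 2) ℝ)
    (hN2 : N * N = 0) (n : ℕ) :
    (σ • (1 : Matrix (Fin 2) (Fin 2) ℝ) + N) ^ n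
      = (σ ^ n) • (1 : Matrix (Fin 2) (Fin 2) ℝ) + ((n : ℝ) * σ ^ (n + 1)) • N := by
  induction n with
  | zero => simp
  | succ n ih =>
    rw [pow_succ, ih]
    have expand : ((σ ^ n) • (1 : Matrix (Fin 2) (Fin 2) ℝ) + ((n : ℝ) * σ ^ (n + 1)) • N) *
        (σ • 1 + N)
        = (σ ^ n * σ) • (1 : Matrix (Fin 2) (Fin 2) ℝ)
          + (σ ^ n + (n : ℝ) * σ ^ (n + 1) * σ) • N
          + ((n : ℝ) * σ ^ (n + 1)) • (N * N) := by
      simp only [mul_add, add_mul, smul_mul_assoc, mul_smul_comm, mul_one, one_mul, smul_smul]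
      abel_nf
      module
    rw [expand, hN2, smul_zero, add_zero, ← pow_succ]
    have e2 : σ ^ n + (n : ℝ) * σ ^ (n + 1) * σ = (((n : ℕ) + 1 : ℕ) : ℝ) * σ ^ (n + 1 + 1) := by
      push_cast
      linear_combination (-(σ ^ n)) * hσ
    rw [e2]

lemma trace_pow_rec (M : Matrix (Fin 2) (Fin 2) ℝ) (h : M.det = 1) (n : ℕ) :
    (M ^ (n + 2)).trace = M.trace * (M ^ (n + 1)).trace - (M ^ n).trace := by
  have : M ^ (n + 2) = M.trace • M ^ (n + 1) - M ^ n := by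
    calc M ^ (n + 2) = M ^ n * (M * M) := by rw [pow_add, pow_two]
    _ = M ^ n * (M.trace • M - 1) := by rw [sl2_sq M h]
    _ = M.trace • (M ^ n * M) - M ^ n := by
        rw [mul_sub, mul_smul_comm, mul_one]
    _ = M.trace • M ^ (n + 1) - M ^ n := by rw [← pow_succ]
  rw [this, trace_sub, trace_smul, smul_eq_mul]

lemma abs_trace_pow_gt (M : Matrix (Fin 2) (Fin 2) ℝ) (h : M.det = 1)
    (ht : 2 < |M.trace|) : ∀ n : ℕ, 1 ≤ n → 2 < |(M ^ n).trace| := by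
  have key : ∀ n : ℕ, 2 ≤ |(M ^ n).trace| ∧ |(M ^ n).trace| < |(M ^ (n + 1)).trace| := by
    intro n
    induction n with
    | zero =>
      constructor
      · simp [Matrix.trace_one]
      · simpa [Matrix.trace_one] using ht
    | succ n ih =>
      obtain ⟨h1, h2⟩ := ih
      have h3 : 2 < |(M ^ (n + 1)).trace| := lt_of_le_of_lt h1 h2
      refine ⟨le_of_lt h3, ?_⟩
      have hrec := trace_pow_rec M h n
      have habs : |M.trace| * |(M ^ (n + 1)).trace| - |(M ^ n).trace|
          ≤ |(M ^ (n + 2)).trace| := by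
        rw [hrec, ← abs_mul]
        exact abs_sub_abs_le_abs_sub _ _
      nlinarith [abs_nonneg ((M ^ n).trace)]
  intro n hn
  obtain ⟨k, rfl⟩ := Nat.exists_eq_add_of_le hn
  have h1 := (key k).1
  have h2 := (key k).2
  calc (2 : ℝ) ≤ |(M ^ k).trace| := h1
  _ < |(M ^ (k + 1)).trace| := h2
  _ = |(M ^ (1 + k)).trace| := by rw [add_comm]

lemma eigen_mu_ne (C : Matrix (Fin 2) (Fin 2) ℝ) (v : Fin 2 → ℝ) (μ : ℝ)
    (hv : v ≠ 0) (hCv : C *ᵥ v = μ • v) (hdet : C.det = 1) (htr : 2 < |C.trace|) :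
    μ ≠ 0 ∧ μ ≠ 1 ∧ μ ≠ -1 := by
  have hker : (C - μ • 1) *ᵥ v = 0 := by
    rw [Matrix.sub_mulVec, Matrix.smul_mulVec, Matrix.one_mulVec, hCv, sub_self]
  have hdet0 : (C - μ • 1).det = 0 := by
    rw [← Matrix.exists_mulVec_eq_zero_iff]
    exact ⟨v, hv, hker⟩
  have hq : μ ^ 2 - C.trace * μ + 1 = 0 := by
    rw [det_fin_two] at hdet0 hdet
    rw [Matrix.trace_fin_two]
    simp [Matrix.sub_apply, Matrix.smul_apply, Matrix.one_apply] at hdet0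
    linear_combination hdet0 - hdet
  refine ⟨?_, ?_, ?_⟩
  · rintro rfl
    norm_num at hq
  · rintro rfl
    have : C.trace = 2 := by linarith [hq]
    rw [this] at htr
    simp at htr
  · rintro rfl
    have : C.trace = -2 := by linarith [hq]
    rw [this] at htr
    rw [abs_neg] at htr
    simp at htr

lemma projAct_mul (g h : SL(2, ℝ)) (x : RP1) :
    projAct (g * h) x = projAct g (projAct h x) := by
  induction x using Projectivization.ind with
  | h v hv =>
    simp only [projAct, Projectivization.map_mk]
    congr 1
    simp [_root_.map_mul]

lemma projAct_one (x : RP1) : projAct 1 x = x := by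
  induction x using Projectivization.ind with
  | h v hv =>
    simp only [projAct, Projectivization.map_mk]
    congr 1
    simp [_root_.map_one]

lemma projAct_fixed {g : SL(2, ℝ)} {x : RP1} (h : projAct g x = x) :
    ∃ μ : ℝ, μ ≠ 0 ∧ (g : Matrix (Fin 2) (Fin 2) ℝ) *ᵥ x.rep = μ • x.rep := by
  have hrep := x.mk_rep
  rw [← hrep] at h
  rw [projAct, Projectivization.map_mk] at h
  rw [Projectivization.mk_eq_mk_iff] at h
  obtain ⟨a, ha⟩ := h
  refine ⟨(a : ℝ), a.ne_zero, ?_⟩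
  have : Matrix.SpecialLinearGroup.toLin' g x.rep = (g : Matrix (Fin 2) (Fin 2) ℝ) *ᵥ x.rep := by
    rw [Matrix.SpecialLinearGroup.toLin'_apply, Matrix.toLin'_apply]
  rw [← this]
  rw [Units.smul_def] at ha
  simpa using ha.symm

lemma parabolic_no_fixed_point (D : SL(2, ℝ)) (σ : ℝ) (N : Matrix (Fin 2) (Fin 2) ℝ)
    (hD : (D : Matrix (Fin 2) (Fin 2) ℝ) = σ • 1 + N) (hσ : σ ^ 2 = 1)
    (hN : N ≠ 0) (hN2 : N * N = 0) (htrN : N.trace = 0) (z : ℍ) :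
    D • z ≠ z := by
  intro hfix
  have hD00 : D 0 0 = σ + N 0 0 := by
    have := congrFun (congrFun hD 0) 0; simpa [Matrix.one_apply] using this
  have hD01 : D 0 1 = N 0 1 := by
    have := congrFun (congrFun hD 0) 1; simpa [Matrix.one_apply] using this
  have hD10 : D 1 0 = N 1 0 := by
    have := congrFun (congrFun hD 1) 0; simpa [Matrix.one_apply] using this
  have hN11 : N 1 1 = -(N 0 0) := by
    rw [Matrix.trace_fin_two] at htrN; linarith
  have hD11 : D 1 1 = σ - N 0 0 := by
    have := congrFun (congrFun hD 1) 1
    simp [Matrix.one_apply, hN11] at this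
    rw [this]; ring
  have e00 : N 0 0 * N 0 0 + N 0 1 * N 1 0 = 0 := by
    have := congrFun (congrFun hN2 0) 0
    simpa [Matrix.mul_apply, Fin.sum_univ_two] using this
  have hσ0 : σ ≠ 0 := by intro h; rw [h] at hσ; norm_num at hσ
  have himz : (z : ℂ).im = z.im := z.coe_im
  have hdenom : ((D 1 0 : ℝ) : ℂ) * (z : ℂ) + ((D 1 1 : ℝ) : ℂ) ≠ 0 := by
    by_cases h10 : N 1 0 = 0
    · have hN00 : N 0 0 = 0 := by
        rw [h10] at e00
        have : N 0 0 * N 0 0 = 0 := by linarith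
        exact mul_self_eq_zero.mp this
      rw [hD10, hD11, h10, hN00]
      simp [hσ0]
    · intro hc
      have := congrArg Complex.im hc
      simp [Complex.add_im, Complex.mul_im, himz, hD10] at this
      rcases this with h | h
      · exact h10 h
      · exact z.im_ne_zero h
  have hcoe : (((D 0 0 : ℝ) : ℂ) * z + ((D 0 1 : ℝ) : ℂ)) /
      (((D 1 0 : ℝ) : ℂ) * z + ((D 1 1 : ℝ) : ℂ)) = (z : ℂ) := by
    have := congrArg (fun w : ℍ => (w : ℂ)) hfix
    rw [UpperHalfPlane.specialLinearGroup_apply] at this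
    simpa using this
  have heq : ((D 0 0 : ℝ) : ℂ) * z + ((D 0 1 : ℝ) : ℂ)
      = (z : ℂ) * (((D 1 0 : ℝ) : ℂ) * z + ((D 1 1 : ℝ) : ℂ)) := by
    rw [div_eq_iff hdenom] at hcoe
    linear_combination hcoe
  have heq2 : ((N 1 0 : ℝ) : ℂ) * (z : ℂ) ^ 2 - 2 * ((N 0 0 : ℝ) : ℂ) * z
      - ((N 0 1 : ℝ) : ℂ) = 0 := by
    rw [hD00, hD01, hD10, hD11] at heq
    push_cast at heq
    linear_combination -heq
  have e00C : ((N 0 0 : ℝ) : ℂ) * ((N 0 0 : ℝ) : ℂ)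
      + ((N 0 1 : ℝ) : ℂ) * ((N 1 0 : ℝ) : ℂ) = 0 := by
    push_cast [← Complex.ofReal_mul, ← Complex.ofReal_add]
    exact_mod_cast congrArg (fun r : ℝ => (r : ℂ)) e00
  have hsq : (((N 1 0 : ℝ) : ℂ) * z - ((N 0 0 : ℝ) : ℂ)) ^ 2 = 0 := by
    linear_combination ((N 1 0 : ℝ) : ℂ) * heq2 + e00C
  have hlin : ((N 1 0 : ℝ) : ℂ) * z = ((N 0 0 : ℝ) : ℂ) := by
    have := pow_eq_zero_iff (n := 2) (by norm_num) |>.mp hsq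
    exact sub_eq_zero.mp this
  by_cases h10 : N 1 0 = 0
  · have hN00 : N 0 0 = 0 := by
      rw [h10] at e00
      have : N 0 0 * N 0 0 = 0 := by linarith
      exact mul_self_eq_zero.mp this
    have hN01 : N 0 1 = 0 := by
      rw [h10, hN00] at heq2
      push_cast at heq2
      have : ((N 0 1 : ℝ) : ℂ) = 0 := by linear_combination -heq2
      exact_mod_cast this
    apply hN
    ext i j
    fin_cases i <;> fin_cases j <;> simp [hN00, hN01, h10, hN11]
  · have := congrArg Complex.im hlin
    simp [Complex.mul_im, Complex.ofReal_im, Complex.ofReal_re, himz] at this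
    rcases this with h | h
    · exact h10 h
    · exact z.im_ne_zero h

lemma parab_decomp (B : SL(2, ℝ)) (hB1 : B ≠ 1) (hBm1 : B ≠ -1)
    (htr : |Matrix.trace (B : Matrix (Fin 2) (Fin 2) ℝ)| = 2) :
    ∃ σ : ℝ, ∃ N : Matrix (Fin 2) (Fin 2) ℝ, σ ^ 2 = 1 ∧ N ≠ 0 ∧ N * N = 0 ∧
      Matrix.trace N = 0 ∧ (B : Matrix (Fin 2) (Fin 2) ℝ) = σ • 1 + N := by
  have hBB := sl2_sq (B : Matrix (Fin 2) (Fin 2) ℝ) B.prop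
  have htr1 : Matrix.trace (1 : Matrix (Fin 2) (Fin 2) ℝ) = 2 := by
    simp [Matrix.trace_one]
  rcases (abs_eq (by norm_num : (0:ℝ) ≤ 2)).mp htr with ht | ht
  · refine ⟨1, (B : Matrix (Fin 2) (Fin 2) ℝ) - 1, by norm_num, ?_, ?_, ?_, by module⟩
    · intro h
      apply hB1
      apply Subtype.ext
      show (B : Matrix (Fin 2) (Fin 2) ℝ) = ((1 : SL(2,ℝ)) : Matrix (Fin 2) (Fin 2) ℝ)
      rw [Matrix.SpecialLinearGroup.coe_one]
      exact sub_eq_zero.mp h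
    · have expand : ((B : Matrix (Fin 2) (Fin 2) ℝ) - 1) * ((B : Matrix (Fin 2) (Fin 2) ℝ) - 1)
          = (B : Matrix (Fin 2) (Fin 2) ℝ) * (B : Matrix (Fin 2) (Fin 2) ℝ)
            - (B : Matrix (Fin 2) (Fin 2) ℝ) - (B : Matrix (Fin 2) (Fin 2) ℝ) + 1 := by
        noncomm_ring
      rw [expand, hBB, ht, two_smul]
      abel
    · rw [Matrix.trace_sub, ht, htr1]; ring
  · refine ⟨-1, (B : Matrix (Fin 2) (Fin 2) ℝ) + 1, by norm_num, ?_, ?_, ?_, by module⟩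
    · intro h
      apply hBm1
      apply Subtype.ext
      show (B : Matrix (Fin 2) (Fin 2) ℝ) = ((-1 : SL(2,ℝ)) : Matrix (Fin 2) (Fin 2) ℝ)
      rw [Matrix.SpecialLinearGroup.coe_neg, Matrix.SpecialLinearGroup.coe_one]
      exact eq_neg_of_add_eq_zero_left h
    · have expand : ((B : Matrix (Fin 2) (Fin 2) ℝ) + 1) * ((B : Matrix (Fin 2) (Fin 2) ℝ) + 1)
          = (B : Matrix (Fin 2) (Fin 2) ℝ) * (B : Matrix (Fin 2) (Fin 2) ℝ)
            + (B : Matrix (Fin 2) (Fin 2) ℝ) + (B : Matrix (Fin 2) (Fin 2) ℝ) + 1 := by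
        noncomm_ring
      rw [expand, hBB, ht]
      have : ((-2 : ℝ)) • (B : Matrix (Fin 2) (Fin 2) ℝ)
          = -((B : Matrix (Fin 2) (Fin 2) ℝ) + (B : Matrix (Fin 2) (Fin 2) ℝ)) := by
        module
      rw [this]
      abel
    · rw [Matrix.trace_add, ht, htr1]; ring

/-- An elementary discrete subgroup of `SL(2, ℝ)` cannot contain both a parabolic
element and a hyperbolic element. -/
theorem elementary_discrete_no_parabolic_and_hyperbolic
    (Γ : Subgroup SL(2, ℝ)) (hd : DiscreteTopology Γ) (he : IsElementary Γ) :
    ¬ ((∃ B ∈ Γ, B ≠ 1 ∧ B ≠ -1 ∧ |Matrix.trace (B : Matrix (Fin 2) (Fin 2) ℝ)| = 2) ∧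
       (∃ A ∈ Γ, 2 < |Matrix.trace (A : Matrix (Fin 2) (Fin 2) ℝ)|)) := by
  rintro ⟨⟨B, hBΓ, hB1, hBm1, hBtr⟩, A, hAΓ, hAtr⟩
  obtain ⟨σ, N, hσ, hN0, hN2, htrN, hBdec⟩ := parab_decomp B hB1 hBm1 hBtr
  have hσ0 : σ ≠ 0 := by intro h; rw [h] at hσ; norm_num at hσ
  -- decomposition of powers of B
  have hpow : ∀ n : ℕ, 1 ≤ n → ∃ σ' : ℝ, ∃ N' : Matrix (Fin 2) (Fin 2) ℝ,
      σ' ^ 2 = 1 ∧ N' ≠ 0 ∧ N' * N' = 0 ∧ Matrix.trace N' = 0 ∧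
      ((B ^ n : SL(2, ℝ)) : Matrix (Fin 2) (Fin 2) ℝ) = σ' • 1 + N' := by
    intro n hn
    refine ⟨σ ^ n, ((n : ℝ) * σ ^ (n + 1)) • N, ?_, ?_, ?_, ?_, ?_⟩
    · rw [← pow_mul, mul_comm, pow_mul, hσ, one_pow]
    · exact smul_ne_zero
        (mul_ne_zero (Nat.cast_ne_zero.mpr (by omega)) (pow_ne_zero _ hσ0)) hN0
    · rw [Matrix.smul_mul, Matrix.mul_smul, hN2, smul_zero, smul_zero]
    · rw [Matrix.trace_smul, htrN, smul_zero]
    · rw [Matrix.SpecialLinearGroup.coe_pow, hBdec, unipotent_pow σ hσ N hN2 n]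
  rcases he with ⟨z, hfin⟩ | ⟨x, hfin⟩
  · -- Case 1 : finite orbit in ℍ
    have hexists : ∃ n : ℕ, 1 ≤ n ∧ (B ^ n) • z = z := by
      haveI := hfin.to_subtype
      obtain ⟨a, b, hab, heqf⟩ := Finite.exists_ne_map_eq_of_infinite
        (fun n : ℕ => (⟨(B ^ n) • z, ⟨B ^ n, pow_mem hBΓ n, rfl⟩⟩ :
          {w : ℍ | ∃ γ ∈ Γ, γ • z = w}))
      have heq : (B ^ a) • z = (B ^ b) • z := congrArg Subtype.val heqf
      have cancel : ∀ a b : ℕ, a < b → (B ^ a) • z = (B ^ b) • z →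
          (B ^ (b - a)) • z = z := by
        intro a b hlt h2
        have hsplit : B ^ b = B ^ a * B ^ (b - a) := by
          rw [← pow_add]; congr 1; omega
        rw [hsplit, mul_smul] at h2
        exact (smul_left_cancel_iff _).mp h2.symm
      rcases Nat.lt_or_ge a b with h | h
      · exact ⟨b - a, by omega, cancel a b h heq⟩
      · have h' : b < a := by omega
        exact ⟨a - b, by omega, cancel b a h' heq.symm⟩
    obtain ⟨n, hn, hfix⟩ := hexists
    obtain ⟨σ', N', hσ', hN0', hN2', htrN', hdec'⟩ := hpow n hn
    exact parabolic_no_fixed_point (B ^ n) σ' N' hdec' hσ' hN0' hN2' htrN' z hfix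
  · -- Case 2 : finite orbit in ℝP¹
    have hfixpow : ∀ g : SL(2, ℝ), g ∈ Γ → ∃ n : ℕ, 1 ≤ n ∧ projAct (g ^ n) x = x := by
      intro g hg
      haveI := hfin.to_subtype
      obtain ⟨a, b, hab, heqf⟩ := Finite.exists_ne_map_eq_of_infinite
        (fun n : ℕ => (⟨projAct (g ^ n) x, ⟨g ^ n, pow_mem hg n, rfl⟩⟩ :
          {y : RP1 | ∃ γ ∈ Γ, projAct γ x = y}))
      have heq : projAct (g ^ a) x = projAct (g ^ b) x := congrArg Subtype.val heqf
      have cancel : ∀ a b : ℕ, a < b → projAct (g ^ a) x = projAct (g ^ b) x →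
          projAct (g ^ (b - a)) x = x := by
        intro a b hlt h2
        have hsplit : g ^ b = g ^ a * g ^ (b - a) := by
          rw [← pow_add]; congr 1; omega
        rw [hsplit, projAct_mul] at h2
        have h3 := congrArg (projAct (g ^ a)⁻¹) h2
        rw [← projAct_mul, ← projAct_mul, inv_mul_cancel, projAct_one, projAct_one] at h3
        exact h3.symm
      rcases Nat.lt_or_ge a b with h | h
      · exact ⟨b - a, by omega, cancel a b h heq⟩
      · have h' : b < a := by omega
        exact ⟨a - b, by omega, cancel b a h' heq.symm⟩
    obtain ⟨n, hn, hfixB⟩ := hfixpow B hBΓ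
    obtain ⟨m, hm, hfixA⟩ := hfixpow A hAΓ
    have hv : x.rep ≠ 0 := Projectivization.rep_nonzero x
    set v : Fin 2 → ℝ := x.rep with hvdef
    obtain ⟨σ', N', hσ', hN0', hN2', htrN', hdec'⟩ := hpow n hn
    have hσ'0 : σ' ≠ 0 := by intro h; rw [h] at hσ'; norm_num at hσ'
    -- eigenvector of D := B ^ n
    obtain ⟨s, hs0, hDv⟩ := projAct_fixed hfixB
    have hNv : N' *ᵥ v = 0 := by
      have h1 : N' *ᵥ v = (s - σ') • v := by
        have hND : N' = ((B ^ n : SL(2, ℝ)) : Matrix (Fin 2) (Fin 2) ℝ) - σ' • 1 := by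
          rw [hdec']; abel
        rw [hND, Matrix.sub_mulVec, hDv, Matrix.smul_mulVec, Matrix.one_mulVec,
          ← sub_smul]
      have h2 : ((s - σ') * (s - σ')) • v = (0 : Fin 2 → ℝ) := by
        calc ((s - σ') * (s - σ')) • v = (s - σ') • ((s - σ') • v) := by rw [mul_smul]
        _ = (s - σ') • (N' *ᵥ v) := by rw [h1]
        _ = N' *ᵥ ((s - σ') • v) := by rw [Matrix.mulVec_smul]
        _ = N' *ᵥ (N' *ᵥ v) := by rw [← h1]
        _ = (N' * N') *ᵥ v := by rw [← Matrix.mulVec_mulVec]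
        _ = 0 := by rw [hN2', Matrix.zero_mulVec]
      have h3 : s = σ' := by
        rcases smul_eq_zero.mp h2 with h | h
        · have := mul_self_eq_zero.mp h; linarith
        · exact absurd h hv
      rw [h1, h3, sub_self, zero_smul]
    -- eigenvector of A ^ m
    have hdetC0 : ((A ^ m : SL(2, ℝ)) : Matrix (Fin 2) (Fin 2) ℝ).det = 1 := (A ^ m).prop
    have htrC0 : 2 < |Matrix.trace ((A ^ m : SL(2, ℝ)) : Matrix (Fin 2) (Fin 2) ℝ)| := by
      rw [Matrix.SpecialLinearGroup.coe_pow]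
      exact abs_trace_pow_gt (A : Matrix (Fin 2) (Fin 2) ℝ) A.prop hAtr m hm
    obtain ⟨μ₀, hμ₀0, hC0v⟩ := projAct_fixed hfixA
    obtain ⟨-, hμ₀1, hμ₀m1⟩ := eigen_mu_ne _ v μ₀ hv hC0v hdetC0 htrC0
    -- choose a contracting element
    have hchoice : ∃ C : SL(2, ℝ), C ∈ Γ ∧ ∃ μ : ℝ,
        ((C : Matrix (Fin 2) (Fin 2) ℝ) *ᵥ v = μ • v) ∧ μ ≠ 0 ∧ |μ| < 1 := by
      rcases lt_trichotomy |μ₀| 1 with h | h | h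
      · exact ⟨A ^ m, pow_mem hAΓ m, μ₀, hC0v, hμ₀0, h⟩
      · exfalso
        rcases (abs_eq (by norm_num : (0:ℝ) ≤ 1)).mp h with h' | h'
        · exact hμ₀1 h'
        · exact hμ₀m1 h'
      · refine ⟨(A ^ m)⁻¹, inv_mem (pow_mem hAΓ m), μ₀⁻¹, ?_, inv_ne_zero hμ₀0, ?_⟩
        · have hid : (((A ^ m)⁻¹ : SL(2, ℝ)) : Matrix (Fin 2) (Fin 2) ℝ) *
              ((A ^ m : SL(2, ℝ)) : Matrix (Fin 2) (Fin 2) ℝ) = 1 := by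
            rw [← Matrix.SpecialLinearGroup.coe_mul, inv_mul_cancel,
              Matrix.SpecialLinearGroup.coe_one]
          have h1 : (((A ^ m)⁻¹ : SL(2, ℝ)) : Matrix (Fin 2) (Fin 2) ℝ) *ᵥ (μ₀ • v) = v := by
            rw [← hC0v, Matrix.mulVec_mulVec, hid, Matrix.one_mulVec]
          rw [Matrix.mulVec_smul] at h1
          have h2 := congrArg (fun w : Fin 2 → ℝ => μ₀⁻¹ • w) h1
          simp only [smul_smul, inv_mul_cancel₀ hμ₀0, one_smul] at h2
          exact h2
        · rw [abs_inv]
          rw [inv_lt_one_iff₀]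
          right; exact h
    obtain ⟨C, hCΓ, μ, hCv, hμ0, hμlt⟩ := hchoice
    obtain ⟨hCN, hNC⟩ := key_comm N' (C : Matrix (Fin 2) (Fin 2) ℝ) v μ hv hNv hN2' hCv
      C.prop hμ0
    -- matrix identities for C⁻¹
    have hCC : (C : Matrix (Fin 2) (Fin 2) ℝ) * ((C⁻¹ : SL(2, ℝ)) : Matrix (Fin 2) (Fin 2) ℝ)
        = 1 := by
      rw [← Matrix.SpecialLinearGroup.coe_mul, mul_inv_cancel,
        Matrix.SpecialLinearGroup.coe_one]
    have hNCi : N' * ((C⁻¹ : SL(2, ℝ)) : Matrix (Fin 2) (Fin 2) ℝ) = μ • N' := by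
      have h1 : (N' * (C : Matrix (Fin 2) (Fin 2) ℝ)) *
          ((C⁻¹ : SL(2, ℝ)) : Matrix (Fin 2) (Fin 2) ℝ) = N' := by
        rw [mul_assoc, hCC, mul_one]
      rw [hNC, Matrix.smul_mul] at h1
      have h2 := congrArg (fun M : Matrix (Fin 2) (Fin 2) ℝ => μ • M) h1
      simp only [smul_smul, mul_inv_cancel₀ hμ0, one_smul] at h2
      exact h2
    -- powers
    have hCkN : ∀ k : ℕ, ((C : Matrix (Fin 2) (Fin 2) ℝ) ^ k) * N' = (μ ^ k) • N' := by
      intro k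
      induction k with
      | zero => simp
      | succ k ih =>
        rw [pow_succ, pow_succ, mul_assoc, hCN, Matrix.mul_smul, ih, smul_smul,
          mul_comm μ (μ ^ k)]
    have hNCik : ∀ k : ℕ,
        N' * (((C⁻¹ : SL(2, ℝ)) : Matrix (Fin 2) (Fin 2) ℝ) ^ k) = (μ ^ k) • N' := by
      intro k
      induction k with
      | zero => simp
      | succ k ih =>
        rw [pow_succ, ← mul_assoc, ih, Matrix.smul_mul, hNCi, smul_smul, pow_succ]
    -- the commutator E = C D C⁻¹ D⁻¹
    set c : ℝ := σ' * (μ * μ - 1) with hcdef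
    have hc0 : c ≠ 0 := by
      apply mul_ne_zero hσ'0
      have h0 := abs_nonneg μ
      have h1 : |μ| * |μ| < 1 := by
        calc |μ| * |μ| ≤ 1 * |μ| := mul_le_mul_of_nonneg_right (le_of_lt hμlt) h0
        _ = |μ| := one_mul _
        _ < 1 := hμlt
      rw [abs_mul_abs_self] at h1
      linarith
    set E : SL(2, ℝ) := C * (B ^ n) * C⁻¹ * (B ^ n)⁻¹ with hEdef
    have hEΓ : E ∈ Γ := mul_mem (mul_mem (mul_mem hCΓ (pow_mem hBΓ n)) (inv_mem hCΓ))
      (inv_mem (pow_mem hBΓ n))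
    have hσσ : σ' * σ' = 1 := by nlinarith [hσ']
    have hDi : (((B ^ n)⁻¹ : SL(2, ℝ)) : Matrix (Fin 2) (Fin 2) ℝ) = σ' • 1 - N' := by
      have hX : ((B ^ n : SL(2, ℝ)) : Matrix (Fin 2) (Fin 2) ℝ) * (σ' • 1 - N') = 1 := by
        rw [hdec']
        have expand : (σ' • (1 : Matrix (Fin 2) (Fin 2) ℝ) + N') * (σ' • 1 - N')
            = (σ' * σ') • (1 : Matrix (Fin 2) (Fin 2) ℝ)
              - σ' • N' + σ' • N' - N' * N' := by
          simp only [mul_sub, add_mul, smul_mul_assoc, mul_smul_comm, mul_one, one_mul,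
            smul_smul]
          module
        rw [expand, hN2', hσσ, one_smul]
        abel
      calc (((B ^ n)⁻¹ : SL(2, ℝ)) : Matrix (Fin 2) (Fin 2) ℝ)
          = (((B ^ n)⁻¹ : SL(2, ℝ)) : Matrix (Fin 2) (Fin 2) ℝ) *
            (((B ^ n : SL(2, ℝ)) : Matrix (Fin 2) (Fin 2) ℝ) * (σ' • 1 - N')) := by
            rw [hX, mul_one]
      _ = ((((B ^ n)⁻¹ : SL(2, ℝ)) : Matrix (Fin 2) (Fin 2) ℝ) *
            ((B ^ n : SL(2, ℝ)) : Matrix (Fin 2) (Fin 2) ℝ)) * (σ' • 1 - N') := by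
            rw [mul_assoc]
      _ = (σ' • 1 - N') := by
            rw [← Matrix.SpecialLinearGroup.coe_mul, inv_mul_cancel,
              Matrix.SpecialLinearGroup.coe_one, one_mul]
    have hE : (E : Matrix (Fin 2) (Fin 2) ℝ) = 1 + c • N' := by
      rw [hEdef]
      rw [Matrix.SpecialLinearGroup.coe_mul, Matrix.SpecialLinearGroup.coe_mul,
        Matrix.SpecialLinearGroup.coe_mul, hdec', hDi]
      have step1 : (C : Matrix (Fin 2) (Fin 2) ℝ) * (σ' • 1 + N')
          = σ' • (C : Matrix (Fin 2) (Fin 2) ℝ) + μ • N' := by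
        rw [mul_add, mul_smul_comm, mul_one, hCN]
      have step2 : (σ' • (C : Matrix (Fin 2) (Fin 2) ℝ) + μ • N') *
          ((C⁻¹ : SL(2, ℝ)) : Matrix (Fin 2) (Fin 2) ℝ)
          = σ' • (1 : Matrix (Fin 2) (Fin 2) ℝ) + (μ * μ) • N' := by
        rw [add_mul, Matrix.smul_mul, hCC, Matrix.smul_mul, hNCi, smul_smul]
      have step3 : (σ' • (1 : Matrix (Fin 2) (Fin 2) ℝ) + (μ * μ) • N') * (σ' • 1 - N')
          = 1 + c • N' := by
        have expand : (σ' • (1 : Matrix (Fin 2) (Fin 2) ℝ) + (μ * μ) • N') * (σ' • 1 - N')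
            = (σ' * σ') • (1 : Matrix (Fin 2) (Fin 2) ℝ)
              + ((μ * μ) * σ') • N' - σ' • N' - (μ * μ) • (N' * N') := by
          simp only [mul_sub, add_mul, smul_mul_assoc, mul_smul_comm, mul_one, one_mul,
            smul_smul]
          module
        rw [expand, hN2', hσσ, one_smul, smul_zero, sub_zero, hcdef]
        have : ((μ * μ) * σ') • N' - σ' • N' = (σ' * (μ * μ - 1)) • N' := by
          rw [← sub_smul]; congr 1; ring
        rw [add_sub_assoc, this]
      rw [step1, step2, step3]
    -- the family W k
    have hW : ∀ k : ℕ, ∃ W : SL(2, ℝ), W ∈ Γ ∧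
        (W : Matrix (Fin 2) (Fin 2) ℝ) = 1 + (c * (μ * μ) ^ k) • N' := by
      intro k
      refine ⟨C ^ k * E * (C⁻¹) ^ k,
        mul_mem (mul_mem (pow_mem hCΓ k) hEΓ) (pow_mem (inv_mem hCΓ) k), ?_⟩
      rw [Matrix.SpecialLinearGroup.coe_mul, Matrix.SpecialLinearGroup.coe_mul,
        Matrix.SpecialLinearGroup.coe_pow, Matrix.SpecialLinearGroup.coe_pow, hE]
      have hCmk1 : ((C : Matrix (Fin 2) (Fin 2) ℝ)) ^ k *
          (((C⁻¹ : SL(2, ℝ)) : Matrix (Fin 2) (Fin 2) ℝ)) ^ k = 1 := by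
        rw [← Matrix.SpecialLinearGroup.coe_pow, ← Matrix.SpecialLinearGroup.coe_pow,
          ← Matrix.SpecialLinearGroup.coe_mul, inv_pow, mul_inv_cancel,
          Matrix.SpecialLinearGroup.coe_one]
      calc ((C : Matrix (Fin 2) (Fin 2) ℝ)) ^ k * (1 + c • N') *
            (((C⁻¹ : SL(2, ℝ)) : Matrix (Fin 2) (Fin 2) ℝ)) ^ k
          = ((C : Matrix (Fin 2) (Fin 2) ℝ)) ^ k *
              (((C⁻¹ : SL(2, ℝ)) : Matrix (Fin 2) (Fin 2) ℝ)) ^ k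
            + c • (((C : Matrix (Fin 2) (Fin 2) ℝ)) ^ k * N' *
              (((C⁻¹ : SL(2, ℝ)) : Matrix (Fin 2) (Fin 2) ℝ)) ^ k) := by
            rw [mul_add, mul_one, add_mul, Matrix.mul_smul, Matrix.smul_mul]
      _ = 1 + c • ((μ ^ k • N') * (((C⁻¹ : SL(2, ℝ)) : Matrix (Fin 2) (Fin 2) ℝ)) ^ k) := by
            rw [hCmk1, hCkN k]
      _ = 1 + c • (μ ^ k • (μ ^ k • N')) := by
            rw [Matrix.smul_mul, hNCik k]
      _ = 1 + (c * (μ * μ) ^ k) • N' := by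
            rw [smul_smul, smul_smul]
            congr 1
            rw [mul_pow]
            ring
    -- discreteness contradiction
    have hopen : IsOpen ({1} : Set Γ) := isOpen_discrete _
    rw [isOpen_induced_iff] at hopen
    obtain ⟨U, hU, hU1⟩ := hopen
    rw [isOpen_induced_iff] at hU
    obtain ⟨V, hV, hVU⟩ := hU
    have h1V : (1 : Matrix (Fin 2) (Fin 2) ℝ) ∈ V := by
      have h1U : (1 : SL(2, ℝ)) ∈ U := by
        have hmem : (1 : Γ) ∈ (Subtype.val ⁻¹' U : Set Γ) := by rw [hU1]; rfl
        simpa using hmem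
      rw [← hVU] at h1U
      simpa [Matrix.SpecialLinearGroup.coe_one] using h1U
    have hμμ : |μ * μ| < 1 := by
      rw [abs_mul]
      have h0 := abs_nonneg μ
      calc |μ| * |μ| ≤ 1 * |μ| := mul_le_mul_of_nonneg_right (le_of_lt hμlt) h0
      _ = |μ| := one_mul _
      _ < 1 := hμlt
    have htendsto : Filter.Tendsto
        (fun k : ℕ => (1 : Matrix (Fin 2) (Fin 2) ℝ) + (c * (μ * μ) ^ k) • N')
        Filter.atTop (nhds 1) := by
      have h0 : Filter.Tendsto (fun k : ℕ => c * (μ * μ) ^ k) Filter.atTop (nhds 0) := by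
        have := tendsto_pow_atTop_nhds_zero_of_abs_lt_one hμμ
        simpa using this.const_mul c
      have hcont : Continuous
          (fun t : ℝ => (1 : Matrix (Fin 2) (Fin 2) ℝ) + t • N') :=
        continuous_const.add (continuous_id.smul continuous_const)
      have := (hcont.tendsto 0).comp h0
      simp only [zero_smul, add_zero] at this
      exact this
    obtain ⟨k, hk⟩ := (htendsto.eventually (hV.mem_nhds h1V)).exists
    obtain ⟨W, hWΓ, hWcoe⟩ := hW k
    have hWU : W ∈ U := by
      rw [← hVU]
      show (W : Matrix (Fin 2) (Fin 2) ℝ) ∈ V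
      rw [hWcoe]; exact hk
    have hW1 : (⟨W, hWΓ⟩ : Γ) ∈ ({1} : Set Γ) := by rw [← hU1]; exact hWU
    have hWone : W = 1 := by
      have := hW1
      simp only [Set.mem_singleton_iff] at this
      exact congrArg Subtype.val this
    have hmat : (1 : Matrix (Fin 2) (Fin 2) ℝ) + (c * (μ * μ) ^ k) • N' = 1 := by
      rw [← hWcoe, hWone, Matrix.SpecialLinearGroup.coe_one]
    have hzero : (c * (μ * μ) ^ k) • N' = 0 := by
      have := congrArg (fun M : Matrix (Fin 2) (Fin 2) ℝ => M - 1) hmat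
      simpa using this
    rcases smul_eq_zero.mp hzero with h | h
    · exact (mul_ne_zero hc0 (pow_ne_zero _ (mul_ne_zero hμ0 hμ0))) h
    · exact hN0' h
end

section
/- A subgroup Γ of SL(2,ℝ) is discrete if and only if the action of Γ on the upper half-plane ℍ is properly discontinuous (in the sense of Mathlib's ProperlyDiscontinuousSMul: for all compact sets K, L ⊆ ℍ, only finitely many γ ∈ Γ satisfy γ • K ∩ L ≠ ∅). -/
open Matrix UpperHalfPlane
open scoped MatrixGroups

open Topology Complex

lemma SL2.isInducing : IsInducing (fun A : SL(2,ℝ) => (A : Matrix (Fin 2) (Fin 2) ℝ)) := ⟨rfl⟩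

lemma SL2.isEmbedding : IsEmbedding (fun A : SL(2,ℝ) => (A : Matrix (Fin 2) (Fin 2) ℝ)) :=
  ⟨SL2.isInducing, fun _ _ h => Subtype.ext h⟩

lemma SL2.isClosedEmbedding :
    IsClosedEmbedding (fun A : SL(2,ℝ) => (A : Matrix (Fin 2) (Fin 2) ℝ)) := by
  refine ⟨SL2.isEmbedding, ?_⟩
  have : Set.range (fun A : SL(2,ℝ) => (A : Matrix (Fin 2) (Fin 2) ℝ))
      = {M : Matrix (Fin 2) (Fin 2) ℝ | M.det = 1} := by
    ext M
    constructor
    · rintro ⟨A, rfl⟩; exact A.2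
    · intro h; exact ⟨⟨M, h⟩, rfl⟩
  rw [this]
  exact isClosed_eq (continuous_id.matrix_det) continuous_const

instance : T2Space SL(2,ℝ) := SL2.isEmbedding.t2Space

instance : IsTopologicalGroup SL(2,ℝ) where
  continuous_mul := by
    rw [SL2.isInducing.continuous_iff]
    have h1 : Continuous fun p : SL(2,ℝ) × SL(2,ℝ) => (p.1 : Matrix (Fin 2) (Fin 2) ℝ) :=
      SL2.isInducing.continuous.comp continuous_fst
    have h2 : Continuous fun p : SL(2,ℝ) × SL(2,ℝ) => (p.2 : Matrix (Fin 2) (Fin 2) ℝ) :=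
      SL2.isInducing.continuous.comp continuous_snd
    simpa [Function.comp_def] using h1.matrix_mul h2
  continuous_inv := by
    rw [SL2.isInducing.continuous_iff]
    simpa [Function.comp_def, Matrix.SpecialLinearGroup.coe_inv] using SL2.isInducing.continuous.matrix_adjugate

instance : LocallyCompactSpace (Matrix (Fin 2) (Fin 2) ℝ) :=
  inferInstanceAs (LocallyCompactSpace (Fin 2 → Fin 2 → ℝ))

instance : LocallyCompactSpace SL(2,ℝ) := SL2.isClosedEmbedding.locallyCompactSpace

lemma SL2.entry_continuous (i j : Fin 2) :
    Continuous fun g : SL(2,ℝ) => (g : Matrix (Fin 2) (Fin 2) ℝ) i j :=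
  SL2.isInducing.continuous.matrix_elem i j

lemma SL2.coe_smul' (g : SL(2,ℝ)) (z : ℍ) :
    (↑(g • z) : ℂ) = ((g 0 0 : ℝ) * z + (g 0 1 : ℝ)) / ((g 1 0 : ℝ) * z + (g 1 1 : ℝ)) := by
  rw [UpperHalfPlane.specialLinearGroup_apply]
  simp

lemma SL2.denom_ne_zero' (g : SL(2,ℝ)) (z : ℍ) :
    ((g 1 0 : ℝ) : ℂ) * z + ((g 1 1 : ℝ) : ℂ) ≠ 0 := by
  intro h
  have h2 : (↑(g • z) : ℂ) = 0 := by rw [SL2.coe_smul', h, div_zero]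
  have h3 : (0:ℝ) < (↑(g • z) : ℂ).im := (g • z).2
  rw [h2] at h3
  simp at h3

lemma SL2.smul_mul_denom (g : SL(2,ℝ)) (z : ℍ) :
    (↑(g • z) : ℂ) * (((g 1 0 : ℝ) : ℂ) * z + ((g 1 1 : ℝ) : ℂ))
      = (((g 0 0 : ℝ) : ℂ) * z + ((g 0 1 : ℝ) : ℂ)) := by
  rw [SL2.coe_smul', div_mul_cancel₀ _ (SL2.denom_ne_zero' g z)]

lemma SL2.continuous_smul : Continuous fun p : SL(2,ℝ) × ℍ => p.1 • p.2 := by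
  rw [UpperHalfPlane.isEmbedding_coe.continuous_iff]
  have hz : Continuous fun p : SL(2,ℝ) × ℍ => (p.2 : ℂ) :=
    UpperHalfPlane.continuous_coe.comp continuous_snd
  have he : ∀ i j, Continuous fun p : SL(2,ℝ) × ℍ => ((p.1 i j : ℝ) : ℂ) := fun i j =>
    Complex.continuous_ofReal.comp ((SL2.entry_continuous i j).comp continuous_fst)
  have : Continuous fun p : SL(2,ℝ) × ℍ =>
      (((p.1 0 0 : ℝ) : ℂ) * p.2 + ((p.1 0 1 : ℝ) : ℂ)) /
        (((p.1 1 0 : ℝ) : ℂ) * p.2 + ((p.1 1 1 : ℝ) : ℂ)) :=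
    Continuous.div (((he 0 0).mul hz).add (he 0 1)) (((he 1 0).mul hz).add (he 1 1))
      fun p => SL2.denom_ne_zero' p.1 p.2
  simpa only [Function.comp_def, SL2.coe_smul'] using this

lemma SL2.key_identity (g : SL(2,ℝ)) (z : ℍ) :
    (((g 0 0 : ℝ) : ℂ) * z + ((g 0 1 : ℝ) : ℂ)) *
      (starRingEnd ℂ) (((g 1 0 : ℝ) : ℂ) * z + ((g 1 1 : ℝ) : ℂ))
      = (↑(g • z) : ℂ) * (Complex.normSq (((g 1 0 : ℝ) : ℂ) * z + ((g 1 1 : ℝ) : ℂ)) : ℝ) := by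
  rw [← SL2.smul_mul_denom g z, mul_assoc, Complex.mul_conj]

lemma SL2.im_eq (g : SL(2,ℝ)) (z : ℍ) :
    z.im = (g • z).im * Complex.normSq (((g 1 0 : ℝ) : ℂ) * z + ((g 1 1 : ℝ) : ℂ)) := by
  have h := congrArg Complex.im (SL2.key_identity g z)
  have hdet : (g 0 0) * (g 1 1) - (g 0 1) * (g 1 0) = 1 := by
    have := g.2
    rw [Matrix.det_fin_two] at this
    exact this
  have hl : ((((g 0 0 : ℝ) : ℂ) * z + ((g 0 1 : ℝ) : ℂ)) *
      (starRingEnd ℂ) (((g 1 0 : ℝ) : ℂ) * z + ((g 1 1 : ℝ) : ℂ))).im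
      = ((g 0 0) * (g 1 1) - (g 0 1) * (g 1 0)) * z.im := by
    simp [Complex.mul_im, Complex.add_im, Complex.add_re, Complex.mul_re,
      UpperHalfPlane.coe_im, UpperHalfPlane.coe_re]
    ring
  rw [hl, hdet, one_mul] at h
  simpa [UpperHalfPlane.coe_im] using h

lemma SL2.isCompact_transporter {K L : Set ℍ} (hK : IsCompact K) (hL : IsCompact L) :
    IsCompact {g : SL(2,ℝ) | ∃ z ∈ K, g • z ∈ L} := by
  rcases Set.eq_empty_or_nonempty K with rfl | hKne
  · convert isCompact_empty
    simp
  rcases Set.eq_empty_or_nonempty L with rfl | hLne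
  · convert isCompact_empty
    simp
  obtain ⟨zK, _, hrK⟩ := hK.exists_isMaxOn hKne
    ((continuous_norm.comp UpperHalfPlane.continuous_coe).continuousOn)
  set rK := ‖(zK : ℂ)‖ with hrKdef
  have hrK0 : 0 ≤ rK := norm_nonneg _
  obtain ⟨zL, hzL, hrL⟩ := hL.exists_isMaxOn hLne
    ((continuous_norm.comp UpperHalfPlane.continuous_coe).continuousOn)
  set rL := ‖(zL : ℂ)‖ with hrLdef
  have hrL0 : 0 ≤ rL := norm_nonneg _
  obtain ⟨zK', _, hεK⟩ := hK.exists_isMinOn hKne UpperHalfPlane.continuous_im.continuousOn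
  set εK := zK'.im with hεKdef
  have hεK0 : 0 < εK := zK'.2
  obtain ⟨zL', _, hεL⟩ := hL.exists_isMinOn hLne UpperHalfPlane.continuous_im.continuousOn
  set εL := zL'.im with hεLdef
  have hεL0 : 0 < εL := zL'.2
  set M := Real.sqrt (rK / εL) with hMdef
  have hM0 : 0 ≤ M := Real.sqrt_nonneg _
  set R := (M/εK) + (M + (M/εK)*rK) + (rL*M/εK) + (rL*M + (rL*M/εK)*rK) with hRdef
  have hbound : ∀ g : SL(2,ℝ), (∃ z ∈ K, g • z ∈ L) →
      ∀ i j, (g : Matrix (Fin 2) (Fin 2) ℝ) i j ∈ Set.Icc (-R) R := by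
    rintro g ⟨z, hz, hgz⟩ i j
    have him : z.im = (g • z).im
        * Complex.normSq (((g 1 0 : ℝ) : ℂ) * z + ((g 1 1 : ℝ) : ℂ)) := SL2.im_eq g z
    have hzim : εK ≤ z.im := hεK hz
    have hzabs : ‖(z : ℂ)‖ ≤ rK := hrK hz
    have hzim' : z.im ≤ rK := by
      have h1 : |(z : ℂ).im| ≤ ‖(z : ℂ)‖ := Complex.abs_im_le_norm _
      rw [UpperHalfPlane.coe_im] at h1
      exact le_trans (le_abs_self _) (le_trans h1 hzabs)
    have hwim : εL ≤ (g • z).im := hεL hgz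
    have hwabs : ‖((g • z : ℍ) : ℂ)‖ ≤ rL := hrL hgz
    have hwim0 : 0 < (g • z).im := (g • z).2
    have hnormSq : Complex.normSq (((g 1 0 : ℝ) : ℂ) * z + ((g 1 1 : ℝ) : ℂ)) ≤ rK / εL := by
      have h1 : Complex.normSq (((g 1 0 : ℝ) : ℂ) * z + ((g 1 1 : ℝ) : ℂ))
          = z.im / (g • z).im := by
        rw [him]; field_simp
      rw [h1]
      exact div_le_div₀ hrK0 hzim' hεL0 hwim
    have habsD : ‖(((g 1 0 : ℝ) : ℂ) * z + ((g 1 1 : ℝ) : ℂ))‖ ≤ M := by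
      rw [Complex.norm_def, hMdef]
      exact Real.sqrt_le_sqrt hnormSq
    have hDim : ((((g 1 0 : ℝ)) : ℂ) * z + (((g 1 1 : ℝ)) : ℂ)).im = (g 1 0) * z.im := by
      simp [UpperHalfPlane.coe_im]
    have hc : |(g 1 0 : ℝ)| ≤ M / εK := by
      rw [le_div_iff₀ hεK0]
      calc |(g 1 0 : ℝ)| * εK ≤ |(g 1 0 : ℝ)| * z.im :=
            mul_le_mul_of_nonneg_left hzim (abs_nonneg _)
        _ = |((((g 1 0 : ℝ)) : ℂ) * z + (((g 1 1 : ℝ)) : ℂ)).im| := by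
            rw [hDim, abs_mul, abs_of_pos z.im_pos]
        _ ≤ ‖((((g 1 0 : ℝ)) : ℂ) * z + (((g 1 1 : ℝ)) : ℂ))‖ :=
            Complex.abs_im_le_norm _
        _ ≤ M := habsD
    have hd : |(g 1 1 : ℝ)| ≤ M + (M/εK)*rK := by
      calc |(g 1 1 : ℝ)| = ‖(((((g 1 0 : ℝ)) : ℂ) * z + (((g 1 1 : ℝ)) : ℂ))
              - (((g 1 0 : ℝ)) : ℂ) * z)‖ := by
            rw [← Real.norm_eq_abs, ← Complex.norm_real]; congr 1; ring
        _ ≤ ‖((((g 1 0 : ℝ)) : ℂ) * z + (((g 1 1 : ℝ)) : ℂ))‖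
            + ‖((((g 1 0 : ℝ)) : ℂ) * z)‖ := norm_sub_le _ _
        _ ≤ M + (M/εK)*rK := by
            apply add_le_add habsD
            rw [norm_mul, Complex.norm_real, Real.norm_eq_abs]
            exact mul_le_mul hc hzabs (norm_nonneg _) (by positivity)
    have hNabs : ‖((((g 0 0 : ℝ)) : ℂ) * z + (((g 0 1 : ℝ)) : ℂ))‖ ≤ rL * M := by
      rw [← SL2.smul_mul_denom g z, norm_mul]
      exact mul_le_mul hwabs habsD (norm_nonneg _) hrL0
    have hNim : ((((g 0 0 : ℝ)) : ℂ) * z + (((g 0 1 : ℝ)) : ℂ)).im = (g 0 0) * z.im := by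
      simp [UpperHalfPlane.coe_im]
    have ha : |(g 0 0 : ℝ)| ≤ rL * M / εK := by
      rw [le_div_iff₀ hεK0]
      calc |(g 0 0 : ℝ)| * εK ≤ |(g 0 0 : ℝ)| * z.im :=
            mul_le_mul_of_nonneg_left hzim (abs_nonneg _)
        _ = |((((g 0 0 : ℝ)) : ℂ) * z + (((g 0 1 : ℝ)) : ℂ)).im| := by
            rw [hNim, abs_mul, abs_of_pos z.im_pos]
        _ ≤ ‖((((g 0 0 : ℝ)) : ℂ) * z + (((g 0 1 : ℝ)) : ℂ))‖ :=
            Complex.abs_im_le_norm _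
        _ ≤ rL * M := hNabs
    have hb : |(g 0 1 : ℝ)| ≤ rL * M + (rL*M/εK)*rK := by
      calc |(g 0 1 : ℝ)| = ‖(((((g 0 0 : ℝ)) : ℂ) * z + (((g 0 1 : ℝ)) : ℂ))
              - (((g 0 0 : ℝ)) : ℂ) * z)‖ := by
            rw [← Real.norm_eq_abs, ← Complex.norm_real]; congr 1; ring
        _ ≤ ‖((((g 0 0 : ℝ)) : ℂ) * z + (((g 0 1 : ℝ)) : ℂ))‖
            + ‖((((g 0 0 : ℝ)) : ℂ) * z)‖ := norm_sub_le _ _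
        _ ≤ rL * M + (rL*M/εK)*rK := by
            apply add_le_add hNabs
            rw [norm_mul, Complex.norm_real, Real.norm_eq_abs]
            exact mul_le_mul ha hzabs (norm_nonneg _) (by positivity)
    have t1 : (0:ℝ) ≤ M/εK := by positivity
    have t2 : (0:ℝ) ≤ M + (M/εK)*rK := by positivity
    have t3 : (0:ℝ) ≤ rL*M/εK := by positivity
    have t4 : (0:ℝ) ≤ rL*M + (rL*M/εK)*rK := by positivity
    rw [Set.mem_Icc, ← abs_le]
    fin_cases i <;> fin_cases j
    · exact le_trans ha (by rw [hRdef]; linarith)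
    · exact le_trans hb (by rw [hRdef]; linarith)
    · exact le_trans hc (by rw [hRdef]; linarith)
    · exact le_trans hd (by rw [hRdef]; linarith)
  have hT : IsCompact {A : Matrix (Fin 2) (Fin 2) ℝ | ∀ i j, A i j ∈ Set.Icc (-R) R} := by
    have h2 : IsCompact (Set.pi Set.univ fun _ : Fin 2 =>
        Set.pi Set.univ fun _ : Fin 2 => Set.Icc (-R) R : Set (Fin 2 → Fin 2 → ℝ)) :=
      isCompact_univ_pi fun _ => isCompact_univ_pi fun _ => isCompact_Icc
    have e : {A : Matrix (Fin 2) (Fin 2) ℝ | ∀ i j, A i j ∈ Set.Icc (-R) R} =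
        (Set.pi Set.univ fun _ : Fin 2 =>
          Set.pi Set.univ fun _ : Fin 2 => Set.Icc (-R) R : Set (Fin 2 → Fin 2 → ℝ)) := by
      ext A
      exact ⟨fun h i _ j _ => h i j, fun h i j => h i trivial j trivial⟩
    rw [e]
    exact h2
  have hB : IsCompact {g : SL(2,ℝ) | ∀ i j, (g : Matrix (Fin 2) (Fin 2) ℝ) i j ∈ Set.Icc (-R) R} :=
    SL2.isClosedEmbedding.isCompact_preimage hT
  have hC : IsCompact ({p : SL(2,ℝ) × ℍ | p.2 ∈ K ∧ p.1 • p.2 ∈ L} ∩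
      ({g : SL(2,ℝ) | ∀ i j, (g : Matrix (Fin 2) (Fin 2) ℝ) i j ∈ Set.Icc (-R) R} ×ˢ K)) :=
    ((hB.prod hK).inter_left
      ((hK.isClosed.preimage continuous_snd).inter (hL.isClosed.preimage SL2.continuous_smul)))
  have himg : {g : SL(2,ℝ) | ∃ z ∈ K, g • z ∈ L} =
      Prod.fst '' ({p : SL(2,ℝ) × ℍ | p.2 ∈ K ∧ p.1 • p.2 ∈ L} ∩
        ({g : SL(2,ℝ) | ∀ i j, (g : Matrix (Fin 2) (Fin 2) ℝ) i j ∈ Set.Icc (-R) R} ×ˢ K)) := by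
    ext g
    constructor
    · rintro ⟨z, hz, hgz⟩
      exact ⟨(g, z), ⟨⟨hz, hgz⟩, hbound g ⟨z, hz, hgz⟩, hz⟩, rfl⟩
    · rintro ⟨⟨g', z⟩, ⟨⟨hz, hgz⟩, -⟩, rfl⟩
      exact ⟨z, hz, hgz⟩
  rw [himg]
  exact hC.image continuous_fst

/-- A subgroup of `SL(2, ℝ)` is discrete if and only if its action on the upper
half-plane is properly discontinuous. -/
theorem discrete_iff_properlyDiscontinuous (Γ : Subgroup SL(2, ℝ)) :
    DiscreteTopology Γ ↔ ProperlyDiscontinuousSMul Γ ℍ := by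
  constructor
  · intro hdisc
    constructor
    intro K L hK hL
    have hS := SL2.isCompact_transporter hK hL
    have hclosed : IsClosed (Γ : Set SL(2,ℝ)) := Subgroup.isClosed_of_discrete
    have hT : IsCompact ((Γ : Set SL(2,ℝ)) ∩ {g | ∃ z ∈ K, g • z ∈ L}) := hS.inter_left hclosed
    have hdT : DiscreteTopology
        (((Γ : Set SL(2,ℝ)) ∩ {g | ∃ z ∈ K, g • z ∈ L} : Set SL(2,ℝ))) :=
      DiscreteTopology.of_subset hdisc Set.inter_subset_left
    have hfin : ((Γ : Set SL(2,ℝ)) ∩ {g | ∃ z ∈ K, g • z ∈ L}).Finite := hT.finite ⟨hdT⟩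
    have hsub : {γ : Γ | (γ • ·) '' K ∩ L ≠ ∅} ⊆
        (Subtype.val) ⁻¹' ((Γ : Set SL(2,ℝ)) ∩ {g | ∃ z ∈ K, g • z ∈ L}) := by
      intro γ hγ
      obtain ⟨w, ⟨z, hzK, hw⟩, hwL⟩ := Set.nonempty_iff_ne_empty.mpr hγ
      exact ⟨γ.2, z, hzK, (show ((γ : SL(2,ℝ)) • z = w) from hw) ▸ hwL⟩
    exact Set.Finite.subset (hfin.preimage (Subtype.val_injective.injOn))
      (fun γ hγ => hsub (Set.nonempty_iff_ne_empty.mp hγ))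
  · intro hPD
    obtain ⟨C, hC_cpt, hC_mem⟩ := exists_compact_mem_nhds (1 : SL(2,ℝ))
    set z₀ : ℍ := ⟨Complex.I, by simp⟩ with hz₀
    have hcont : Continuous fun g : SL(2,ℝ) => g • z₀ := by
      have key : Continuous ((fun p : SL(2,ℝ) × ℍ => p.1 • p.2) ∘
          (fun g : SL(2,ℝ) => (g, z₀))) :=
        SL2.continuous_smul.comp (continuous_id.prodMk continuous_const)
      exact key
    have hD : IsCompact ((fun g : SL(2,ℝ) => g • z₀) '' C) := hC_cpt.image hcont
    have hfin := hPD.finite_disjoint_inter_image (L := (fun g : SL(2,ℝ) => g • z₀) '' C)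
      (isCompact_singleton : IsCompact {z₀}) hD
    have hsub : {γ : Γ | (γ : SL(2,ℝ)) ∈ C} ⊆
        {γ : Γ | (γ • ·) '' {z₀} ∩ ((fun g : SL(2,ℝ) => g • z₀) '' C) ≠ ∅} := by
      intro γ hγ
      rw [Set.mem_setOf_eq, Ne, ← Set.not_nonempty_iff_eq_empty]
      rw [not_not]
      exact ⟨γ • z₀, ⟨z₀, rfl, rfl⟩, ⟨(γ : SL(2,ℝ)), hγ, rfl⟩⟩
    have hfinC : {γ : Γ | (γ : SL(2,ℝ)) ∈ C}.Finite := hfin.subset (fun γ hγ => Set.nonempty_iff_ne_empty.mpr (hsub hγ))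
    rw [discreteTopology_iff_isOpen_singleton_one]
    set F := ((Subtype.val '' {γ : Γ | (γ : SL(2,ℝ)) ∈ C}) \ {1} : Set SL(2,ℝ)) with hF
    have hFfin : F.Finite := (hfinC.image _).diff
    have hFclosed : IsClosed F := hFfin.isClosed
    have hU : IsOpen (interior C \ F) := isOpen_interior.sdiff hFclosed
    have h1U : (1 : SL(2,ℝ)) ∈ interior C \ F :=
      ⟨mem_interior_iff_mem_nhds.2 hC_mem, fun h => h.2 rfl⟩
    have heq : ({1} : Set Γ) = (Subtype.val ⁻¹' (interior C \ F) : Set Γ) := by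
      ext γ
      constructor
      · rintro rfl
        exact h1U
      · rintro ⟨hin, hnF⟩
        by_contra hne
        apply hnF
        refine ⟨⟨γ, show ((γ : SL(2,ℝ)) ∈ C) from interior_subset hin, rfl⟩, ?_⟩
        simp only [Set.mem_singleton_iff]
        intro h1
        exact hne (Subtype.ext h1)
    rw [heq]
    exact hU.preimage continuous_subtype_val
end
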